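/- arXiv:2206.00750 — 5 statements merged into one kernel-verified Lean document; each statement's English description precedes it below -/
import Mathlib

section
/- There exists a unique function H from the positive integers to the positive integers such that H(1) = 1 and H(n) = n − H(H(H(n−1))) for all n > 1; moreover this function satisfies 1 ≤ H(n) ≤ n for all n ≥ 1 (so the Hofstadter H recursion is well-defined). -/
def hofG : ℕ → ℕ
  | 0 => 0
  | 1 => 1
  | (n+2) => (n+2) - hofG (min (hofG (min (hofG (n+1)) (n+1))) (n+1))
  decreasing_by all_goals simp_wf

lemma hofG_one : hofG 1 = 1 := by rw [hofG]

lemma hofG_bound : ∀ n, 1 ≤ n → 1 ≤ hofG n ∧ hofG n ≤ n := by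
  intro n
  induction n using Nat.strong_induction_on with
  | _ n ih =>
    match n with
    | 0 => omega
    | 1 => intro _; rw [hofG_one]; omega
    | (m+2) =>
      intro _
      have h1 : 1 ≤ hofG (m+1) ∧ hofG (m+1) ≤ m+1 := ih (m+1) (by omega) (by omega)
      have e1 : min (hofG (m+1)) (m+1) = hofG (m+1) := min_eq_left h1.2
      have h2 : 1 ≤ hofG (hofG (m+1)) ∧ hofG (hofG (m+1)) ≤ hofG (m+1) :=
        ih (hofG (m+1)) (by omega) h1.1
      have e2 : min (hofG (hofG (m+1))) (m+1) = hofG (hofG (m+1)) :=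
        min_eq_left (by omega)
      have h3 : 1 ≤ hofG (hofG (hofG (m+1))) ∧ hofG (hofG (hofG (m+1))) ≤ hofG (hofG (m+1)) :=
        ih (hofG (hofG (m+1))) (by omega) h2.1
      have key : hofG (m+2) = (m+2) - hofG (hofG (hofG (m+1))) := by
        conv_lhs => rw [hofG]
        rw [e1, e2]
      omega

lemma hofG_rec : ∀ n, 1 < n → hofG n + hofG (hofG (hofG (n-1))) = n := by
  intro n hn
  match n, hn with
  | (m+2), _ =>
    have h1 := hofG_bound (m+1) (by omega)
    have e1 : min (hofG (m+1)) (m+1) = hofG (m+1) := min_eq_left h1.2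
    have h2 := hofG_bound (hofG (m+1)) h1.1
    have e2 : min (hofG (hofG (m+1))) (m+1) = hofG (hofG (m+1)) :=
      min_eq_left (by omega)
    have h3 := hofG_bound (hofG (hofG (m+1))) h2.1
    have key : hofG (m+2) = (m+2) - hofG (hofG (hofG (m+1))) := by
      conv_lhs => rw [hofG]
      rw [e1, e2]
    simp only [show m+2-1 = m+1 from rfl]
    omega

/-- There exists a unique function `H` from the positive integers
to the positive integers such that `H 1 = 1` and `H n = n - H (H (H (n-1)))` for
all `n > 1` (stated additively as `H n + H (H (H (n-1))) = n` to avoid truncated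
subtraction); moreover this function satisfies `1 ≤ H n ≤ n` for all `n ≥ 1`. -/
theorem hofstadter_H_exists_unique :
    ∃ H : ℕ → ℕ,
      (H 1 = 1 ∧ ∀ n, 1 < n → H n + H (H (H (n - 1))) = n) ∧
      (∀ n, 1 ≤ n → 1 ≤ H n ∧ H n ≤ n) ∧
      (∀ H' : ℕ → ℕ,
        (H' 1 = 1 ∧ ∀ n, 1 < n → H' n + H' (H' (H' (n - 1))) = n) →
        ∀ n, 1 ≤ n → H' n = H n) := by
  refine ⟨hofG, ⟨hofG_one, hofG_rec⟩, hofG_bound, ?_⟩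
  rintro H' ⟨h1, hrec⟩ n
  induction n using Nat.strong_induction_on with
  | _ n ih =>
    intro hn
    match n, hn with
    | 1, _ => rw [h1, hofG_one]
    | (m+2), _ =>
      have b1 := hofG_bound (m+1) (by omega)
      have e1 : H' (m+1) = hofG (m+1) := ih (m+1) (by omega) (by omega)
      have b2 := hofG_bound (hofG (m+1)) b1.1
      have e2 : H' (hofG (m+1)) = hofG (hofG (m+1)) := ih _ (by omega) b1.1
      have e3 : H' (hofG (hofG (m+1))) = hofG (hofG (hofG (m+1))) := ih _ (by omega) b2.1
      have hr := hrec (m+2) (by omega)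
      have gr := hofG_rec (m+2) (by omega)
      simp only [show m+2-1 = m+1 from rfl] at hr gr
      rw [e1, e2, e3] at hr
      omega
end

section
/- Let n ≥ 1 and let n = h(k_1) + h(k_2) + … + h(k_m) with k_1 > k_2 > … > k_m be the greedy Narayana representation of n (k_1 is the largest index with h(k_1) ≤ n, and the remaining indices are obtained recursively from the remainder n − h(k_1)). Then k_j − k_{j+1} ≥ 3 for every 1 ≤ j < m, and H(n) = h(k_1 − 1) + h(k_2 − 1) + … + h(k_m − 1), where h(0) = 1. That is, H(n) is the right shift of the digits of n in the Narayana base. -/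
/-- The Narayana sequence: `h 1 = 1`, `h 2 = 2`, `h 3 = 3`,
`h k = h (k-1) + h (k-3)` for `k > 3`; additionally `h 0 = 1`. -/
def narayana : ℕ → ℕ
  | 0 => 1
  | 1 => 1
  | 2 => 2
  | 3 => 3
  | (k + 4) => narayana (k + 3) + narayana (k + 1)

namespace HNar
open List

instance : IsTrans ℕ (fun a b => b + 3 ≤ a) := ⟨by intro a b c h1 h2; omega⟩

lemma h_pos : ∀ k, 0 < narayana k := by
  intro k
  induction k using Nat.strong_induction_on with
  | _ k ih =>
    match k with
    | 0 | 1 | 2 | 3 => simp [narayana]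
    | (k+4) =>
      have := ih (k+3) (by omega)
      simp [narayana]; omega

lemma h_succ : ∀ k, 1 ≤ k → narayana (k+1) = narayana k + narayana (k-2) := by
  intro k hk
  match k with
  | 1 => rfl
  | 2 => rfl
  | (j+3) => rfl

/-- h a = h (a-1) + h (a-3) for a ≥ 2 -/
lemma h_split : ∀ a, 2 ≤ a → narayana (a-1) + narayana (a-3) = narayana a := by
  intro a ha
  match a with
  | 2 => rfl
  | 3 => rfl
  | (b+4) => rfl

lemma h_mono : Monotone narayana := by
  apply monotone_nat_of_le_succ
  intro k
  match k with
  | 0 => simp [narayana]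
  | (j+1) => rw [h_succ (j+1) (by omega)]; omega

lemma h_strict : ∀ a b, 1 ≤ a → a < b → narayana a < narayana b := by
  intro a b ha hab
  have h1 : narayana a < narayana (a+1) := by
    rw [h_succ a ha]
    have := h_pos (a-2); omega
  exact lt_of_lt_of_le h1 (h_mono hab)

lemma le_h : ∀ k, k ≤ narayana k := by
  intro k
  induction k using Nat.strong_induction_on with
  | _ k ih =>
    match k with
    | 0 | 1 | 2 | 3 => simp [narayana]
    | (k+4) =>
      have h1 := ih (k+3) (by omega)
      have h2 := h_pos (k+1)
      simp [narayana]; omega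

def sumN (l : List ℕ) : ℕ := (l.map narayana).sum
def shN (l : List ℕ) : ℕ := (l.map (fun j => narayana (j-1))).sum

def Valid (l : List ℕ) : Prop :=
  l.Pairwise (fun a b => b + 3 ≤ a) ∧ ∀ x ∈ l, 1 ≤ x

lemma sumN_append (A B : List ℕ) : sumN (A ++ B) = sumN A + sumN B := by
  simp [sumN]

lemma shN_append (A B : List ℕ) : shN (A ++ B) = shN A + shN B := by
  simp [shN]

lemma valid_nil : Valid [] := ⟨List.Pairwise.nil, by simp⟩

lemma valid_append (A B : List ℕ) (hA : Valid A) (hB : Valid B)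
    (hj : ∀ x ∈ A, ∀ y ∈ B, y + 3 ≤ x) : Valid (A ++ B) := by
  constructor
  · rw [List.pairwise_append]
    exact ⟨hA.1, hB.1, hj⟩
  · intro x hx
    rcases List.mem_append.mp hx with h | h
    exacts [hA.2 x h, hB.2 x h]

lemma valid_append_iff (A B : List ℕ) : Valid (A ++ B) ↔
    Valid A ∧ Valid B ∧ ∀ x ∈ A, ∀ y ∈ B, y + 3 ≤ x := by
  constructor
  · intro h
    rw [Valid, List.pairwise_append] at h
    refine ⟨⟨h.1.1, ?_⟩, ⟨h.1.2.1, ?_⟩, h.1.2.2⟩ <;>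
      intro x hx <;> exact h.2 x (by simp [hx])
  · rintro ⟨h1, h2, h3⟩; exact valid_append A B h1 h2 h3

lemma valid_cons_iff (a : ℕ) (l : List ℕ) :
    Valid (a :: l) ↔ Valid l ∧ 1 ≤ a ∧ ∀ x ∈ l, x + 3 ≤ a := by
  have := valid_append_iff [a] l
  simp only [List.singleton_append] at this
  rw [this]
  constructor
  · rintro ⟨h1, h2, h3⟩
    exact ⟨h2, h1.2 a (by simp), fun x hx => h3 a (by simp) x hx⟩
  · rintro ⟨h1, h2, h3⟩
    exact ⟨⟨by simp, by simp [h2]⟩, h1, by simpa using h3⟩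

lemma valid_shift (K : List ℕ) (hK : Valid K) (h2 : ∀ x ∈ K, 2 ≤ x) :
    Valid (K.map (fun x => x - 1)) := by
  constructor
  · rw [List.pairwise_map]
    refine hK.1.imp_of_mem ?_
    intro a b ha hb hab
    have := h2 b hb
    omega
  · intro x hx
    rw [List.mem_map] at hx
    obtain ⟨y, hy, rfl⟩ := hx
    have := h2 y hy; omega

lemma sumN_shift (K : List ℕ) : sumN (K.map (fun x => x - 1)) = shN K := by
  simp [sumN, shN, List.map_map]; rfl

/-- termwise: Σ h(x-1) + Σ h(x-3) = Σ h(x) for elements ≥ 2 -/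
lemma sum_split (K : List ℕ) (h2 : ∀ x ∈ K, 2 ≤ x) :
    shN K + shN ((K.map (fun x => x - 1)).map (fun x => x - 1)) = sumN K := by
  induction K with
  | nil => simp [shN, sumN]
  | cons a t ih =>
    have ha := h2 a (by simp)
    have ht := ih (fun x hx => h2 x (by simp [hx]))
    simp only [List.map_cons, shN, List.map, List.sum_cons, sumN] at *
    have : a - 1 - 1 - 1 = a - 3 := by omega
    rw [this]
    have := h_split a ha
    omega

def gk (n : ℕ) : ℕ := Nat.findGreatest (fun t => narayana t ≤ n) n

lemma gk_pos (n : ℕ) (hn : 1 ≤ n) : 1 ≤ gk n :=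
  Nat.le_findGreatest hn (by simpa [narayana] using hn)

lemma gk_le (n : ℕ) (hn : 1 ≤ n) : narayana (gk n) ≤ n :=
  Nat.findGreatest_spec (P := fun t => narayana t ≤ n) hn (by simpa [narayana] using hn)

lemma gk_max (n t : ℕ) (ht : narayana t ≤ n) : t ≤ gk n :=
  Nat.le_findGreatest (le_trans (le_h t) ht) ht

lemma gk_lt (n : ℕ) (hn : 1 ≤ n) : n < narayana (gk n + 1) := by
  by_contra h
  push_neg at h
  have := gk_max n (gk n + 1) h
  omega

def T : ℕ → ℕ
  | 0 => 0
  | (n+1) => narayana (gk (n+1) - 1) + T ((n+1) - narayana (gk (n+1)))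
  decreasing_by
    have := h_pos (gk (n+1)); omega

lemma T_eq (n : ℕ) (hn : 1 ≤ n) :
    T n = narayana (gk n - 1) + T (n - narayana (gk n)) := by
  match n with
  | (n+1) => rw [T]

lemma T_le (n : ℕ) : T n ≤ n := by
  induction n using Nat.strong_induction_on with
  | _ n ih =>
    match n with
    | 0 => simp [T]
    | (n+1) =>
      rw [T]
      have hg := gk_le (n+1) (by omega)
      have hp := h_pos (gk (n+1))
      have h1 : narayana (gk (n+1) - 1) ≤ narayana (gk (n+1)) := h_mono (by omega)
      have := ih ((n+1) - narayana (gk (n+1))) (by omega)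
      omega

lemma T_pos (n : ℕ) (hn : 1 ≤ n) : 1 ≤ T n := by
  rw [T_eq n hn]
  have := h_pos (gk n - 1); omega

lemma sum_lt : ∀ (l : List ℕ) (c : ℕ), Valid l → (∀ x ∈ l, x < c) → sumN l < narayana c := by
  intro l
  induction l with
  | nil => intro c _ _; simpa [sumN] using h_pos c
  | cons a t ih =>
    intro c hv hb
    obtain ⟨hvt, ha, hgap⟩ := (valid_cons_iff a t).mp hv
    have hac : a < c := hb a (by simp)
    match t with
    | [] =>
      simp only [sumN, List.map, List.sum_cons, List.sum_nil, add_zero]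
      exact lt_of_lt_of_le (h_strict a c ha hac) le_rfl
    | (b :: t') =>
      have hb4 : b + 3 ≤ a := hgap b (by simp)
      have hb1 : 1 ≤ b := hvt.2 b (by simp)
      have htlt : sumN (b :: t') < narayana (a - 2) := by
        apply ih (a-2) hvt
        intro x hx
        have := hgap x hx; omega
      have heq : narayana a + narayana (a - 2) = narayana (a+1) := (h_succ a ha).symm
      have hle : narayana (a+1) ≤ narayana c := h_mono (by omega)
      have : sumN (a :: (b :: t')) = narayana a + sumN (b :: t') := by
        simp [sumN]
      omega

lemma gk_of_valid (a : ℕ) (t : List ℕ) (hv : Valid (a :: t)) :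
    gk (sumN (a :: t)) = a := by
  obtain ⟨hvt, ha, hgap⟩ := (valid_cons_iff a t).mp hv
  have hle : narayana a ≤ sumN (a :: t) := by simp [sumN]
  have hlt : sumN (a :: t) < narayana (a + 1) := by
    apply sum_lt _ (a+1) hv
    intro x hx
    rcases List.mem_cons.mp hx with rfl | hx
    · omega
    · have := hgap x hx; omega
  have h1 : a ≤ gk (sumN (a :: t)) := gk_max _ a hle
  have hs1 : 1 ≤ sumN (a :: t) := le_trans (h_pos a) hle
  by_contra h
  have hlt2 : a + 1 ≤ gk (sumN (a :: t)) := by omega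
  have := h_mono hlt2
  have := gk_le (sumN (a :: t)) hs1
  omega

lemma T_split : ∀ (l : List ℕ), Valid l → T (sumN l) = shN l := by
  intro l
  induction l with
  | nil => simp [sumN, shN, T]
  | cons a t ih =>
    intro hv
    obtain ⟨hvt, ha, hgap⟩ := (valid_cons_iff a t).mp hv
    have hgk := gk_of_valid a t hv
    have hs1 : 1 ≤ sumN (a :: t) := by
      have : narayana a ≤ sumN (a :: t) := by simp [sumN]
      have := h_pos a; omega
    rw [T_eq _ hs1, hgk]
    have : sumN (a :: t) - narayana a = sumN t := by simp [sumN]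
    rw [this, ih hvt]
    simp [shN]

/-- chain r = [r-1, r-4, ...] down to 1, 2 or 3; represents narayana r - 1 -/
def chain : ℕ → List ℕ
  | 0 => []
  | 1 => []
  | 2 => [1]
  | 3 => [2]
  | 4 => [3]
  | (r + 5) => (r + 4) :: chain (r + 2)

lemma chain_sum : ∀ r, sumN (chain r) + 1 = narayana r := by
  intro r
  induction r using Nat.strong_induction_on with
  | _ r ih =>
    match r with
    | 0 | 1 | 2 | 3 | 4 => rfl
    | (r+5) =>
      have h2 := ih (r+2) (by omega)
      have : sumN (chain (r+5)) = narayana (r+4) + sumN (chain (r+2)) := by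
        simp [chain, sumN]
      have hs : narayana (r+5) = narayana (r+4) + narayana (r+2) := h_succ (r+4) (by omega)
      omega

lemma chain_valid : ∀ r, Valid (chain r) ∧ ∀ x ∈ chain r, 1 ≤ x ∧ x + 1 ≤ r := by
  intro r
  induction r using Nat.strong_induction_on with
  | _ r ih =>
    match r with
    | 0 | 1 => exact ⟨valid_nil, by simp [chain]⟩
    | 2 | 3 | 4 =>
      refine ⟨⟨by simp [chain], by simp [chain]⟩, by simp [chain]⟩
    | (r+5) =>
      obtain ⟨hv, hb⟩ := ih (r+2) (by omega)
      constructor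
      · show Valid ((r+4) :: chain (r+2))
        rw [valid_cons_iff]
        refine ⟨hv, by omega, ?_⟩
        intro x hx
        have := (hb x hx).2; omega
      · intro x hx
        rcases List.mem_cons.mp hx with rfl | hx
        · omega
        · have := hb x hx; omega

def ch1 (r : ℕ) : List ℕ := if r % 3 = 2 then [r-1] else chain (r-1)
def ch2 (r : ℕ) : List ℕ := if r % 3 = 1 then chain (r-2) else [r-2]

lemma W1 : ∀ r, 3 ≤ r → shN (chain r) = sumN (ch1 r) := by
  intro r
  induction r using Nat.strong_induction_on with
  | _ r ih =>
    intro hr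
    match r with
    | 3 => rfl
    | 4 => rfl
    | 5 => rfl
    | (r+6) =>
      have ihh := ih (r+3) (by omega) (by omega)
      have hch : chain (r+6) = (r+5) :: chain (r+3) := rfl
      have hsh : shN (chain (r+6)) = narayana (r+4) + shN (chain (r+3)) := by
        rw [hch]; simp [shN]
      have hmod : (r+6) % 3 = (r+3) % 3 := by omega
      have hrec : narayana (r+4) + narayana (r+2) = narayana (r+5) := (h_succ (r+4) (by omega)).symm
      by_cases h2 : (r+6) % 3 = 2
      · simp only [ch1, if_pos h2]
        simp only [ch1, if_pos (by omega : (r+3) % 3 = 2)] at ihh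
        have e1 : sumN [r+6-1] = narayana (r+5) := by
          simp only [sumN, List.map, List.sum_cons, List.sum_nil, add_zero]; congr 1 <;> omega
        have e2 : sumN [r+3-1] = narayana (r+2) := by
          simp only [sumN, List.map, List.sum_cons, List.sum_nil, add_zero]; congr 1 <;> omega
        omega
      · simp only [ch1, if_neg h2]
        simp only [ch1, if_neg (by omega : ¬ (r+3) % 3 = 2)] at ihh
        have e1 : (r+6-1:ℕ) = r+5 := by omega
        have e2 : (r+3-1:ℕ) = r+2 := by omega
        rw [e1]
        rw [e2] at ihh
        have c1 := chain_sum (r+5)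
        have c2 := chain_sum (r+2)
        omega

lemma W2 (r : ℕ) (hr : 3 ≤ r) : Valid (ch1 r) ∧ ∀ x ∈ ch1 r, 1 ≤ x ∧ x + 1 ≤ r := by
  rw [ch1]
  split
  · refine ⟨⟨by simp, by simp; omega⟩, by simp; omega⟩
  · obtain ⟨hv, hb⟩ := chain_valid (r-1)
    exact ⟨hv, fun x hx => by have := hb x hx; omega⟩

lemma W3 (r : ℕ) (hr : 3 ≤ r) : shN (ch1 r) = sumN (ch2 r) := by
  rcases Nat.lt_or_ge r 5 with h5 | h5
  · interval_cases r <;> rfl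
  · rw [ch1, ch2]
    rcases (by omega : r % 3 = 0 ∨ r % 3 = 1 ∨ r % 3 = 2) with h | h | h
    · rw [if_neg (by omega), if_neg (by omega)]
      have := W1 (r-1) (by omega)
      rw [ch1, if_pos (by omega : (r-1) % 3 = 2)] at this
      rw [this]
      have : (r-1-1:ℕ) = r-2 := by omega
      rw [this]
    · rw [if_neg (by omega), if_pos (by omega)]
      have := W1 (r-1) (by omega)
      rw [ch1, if_neg (by omega : ¬ (r-1) % 3 = 2)] at this
      rw [this]
      have : (r-1-1:ℕ) = r-2 := by omega
      rw [this]
    · rw [if_pos (by omega), if_neg (by omega)]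
      have e : shN [r-1] = narayana (r-2) := by
        simp only [shN, List.map, List.sum_cons, List.sum_nil, add_zero]; congr 1 <;> omega
      rw [e]
      simp [sumN]

lemma W4 (r : ℕ) (hr : 3 ≤ r) : Valid (ch2 r) ∧ ∀ x ∈ ch2 r, 1 ≤ x ∧ x + 2 ≤ r := by
  rw [ch2]
  split
  · obtain ⟨hv, hb⟩ := chain_valid (r-2)
    exact ⟨hv, fun x hx => by have := hb x hx; omega⟩
  · refine ⟨⟨by simp, by simp; omega⟩, by simp; omega⟩

lemma W5 (r : ℕ) (hr : 3 ≤ r) : shN (ch2 r) = narayana (r - 3) := by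
  rw [ch2]
  rcases Nat.lt_or_ge r 5 with h5 | h5
  · interval_cases r <;> simp_all <;> rfl
  · split
    · have := W1 (r-2) (by omega)
      rw [ch1, if_pos (by omega : (r-2) % 3 = 2)] at this
      rw [this]
      have e : sumN [r-2-1] = narayana (r-3) := by
        simp only [sumN, List.map, List.sum_cons, List.sum_nil, add_zero]; congr 1 <;> omega
      rw [e]
    · have e : shN [r-2] = narayana (r-3) := by
        simp only [shN, List.map, List.sum_cons, List.sum_nil, add_zero]; congr 1 <;> omega
      rw [e]

/-- segA d = [3d+2, 3d-1, ..., 5, 2] -/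
def segA : ℕ → List ℕ
  | 0 => [2]
  | (d+1) => (3*d+5) :: segA d

/-- segB d = [3d+2, 3d-1, ..., 5, 1] -/
def segB : ℕ → List ℕ
  | 0 => [1]
  | (d+1) => (3*d+5) :: segB d

/-- segC d = [3d+1, 3d-2, ..., 4, 1] -/
def segC : ℕ → List ℕ
  | 0 => [1]
  | (d+1) => (3*d+4) :: segC d

lemma segA_sum : ∀ d, sumN (segA d) + 1 = narayana (3*d+3) := by
  intro d
  induction d with
  | zero => rfl
  | succ d ih =>
    have e : sumN (segA (d+1)) = narayana (3*d+5) + sumN (segA d) := by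
      simp [segA, sumN]
    have hs : narayana (3*d+6) = narayana (3*d+5) + narayana (3*d+3) := by
      have := h_succ (3*d+5) (by omega)
      have e2 : (3*d+5-2:ℕ) = 3*d+3 := by omega
      rw [e2] at this
      convert this using 2 <;> omega
    have e3 : (3*(d+1)+3:ℕ) = 3*d+6 := by omega
    rw [e3]
    omega

lemma segB_sum : ∀ d, sumN (segB d) + 2 = narayana (3*d+3) := by
  intro d
  induction d with
  | zero => rfl
  | succ d ih =>
    have e : sumN (segB (d+1)) = narayana (3*d+5) + sumN (segB d) := by
      simp [segB, sumN]
    have hs : narayana (3*d+6) = narayana (3*d+5) + narayana (3*d+3) := by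
      have := h_succ (3*d+5) (by omega)
      have e2 : (3*d+5-2:ℕ) = 3*d+3 := by omega
      rw [e2] at this
      convert this using 2 <;> omega
    have e3 : (3*(d+1)+3:ℕ) = 3*d+6 := by omega
    rw [e3]
    omega

lemma segC_sum : ∀ d, sumN (segC d) + 1 = narayana (3*d+2) := by
  intro d
  induction d with
  | zero => rfl
  | succ d ih =>
    have e : sumN (segC (d+1)) = narayana (3*d+4) + sumN (segC d) := by
      simp [segC, sumN]
    have hs : narayana (3*d+5) = narayana (3*d+4) + narayana (3*d+2) := by
      have := h_succ (3*d+4) (by omega)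
      have e2 : (3*d+4-2:ℕ) = 3*d+2 := by omega
      rw [e2] at this
      convert this using 2 <;> omega
    have e3 : (3*(d+1)+2:ℕ) = 3*d+5 := by omega
    rw [e3]
    omega

lemma segA_valid : ∀ d, Valid (segA d) ∧ ∀ x ∈ segA d, 1 ≤ x ∧ x ≤ 3*d+2 := by
  intro d
  induction d with
  | zero =>
    exact ⟨⟨by simp [segA], by simp [segA]⟩, by simp [segA]⟩
  | succ d ih =>
    obtain ⟨hv, hb⟩ := ih
    constructor
    · show Valid ((3*d+5) :: segA d)
      rw [valid_cons_iff]
      exact ⟨hv, by omega, fun x hx => by have := (hb x hx).2; omega⟩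
    · intro x hx
      rcases List.mem_cons.mp hx with rfl | hx
      · omega
      · have := hb x hx; omega

lemma segB_valid : ∀ d, Valid (segB d) ∧ ∀ x ∈ segB d, 1 ≤ x ∧ x ≤ 3*d+2 := by
  intro d
  induction d with
  | zero =>
    exact ⟨⟨by simp [segB], by simp [segB]⟩, by simp [segB]⟩
  | succ d ih =>
    obtain ⟨hv, hb⟩ := ih
    constructor
    · show Valid ((3*d+5) :: segB d)
      rw [valid_cons_iff]
      exact ⟨hv, by omega, fun x hx => by have := (hb x hx).2; omega⟩
    · intro x hx
      rcases List.mem_cons.mp hx with rfl | hx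
      · omega
      · have := hb x hx; omega

lemma segC_valid : ∀ d, Valid (segC d) ∧ ∀ x ∈ segC d, 1 ≤ x ∧ x ≤ 3*d+1 := by
  intro d
  induction d with
  | zero =>
    exact ⟨⟨by simp [segC], by simp [segC]⟩, by simp [segC]⟩
  | succ d ih =>
    obtain ⟨hv, hb⟩ := ih
    constructor
    · show Valid ((3*d+4) :: segC d)
      rw [valid_cons_iff]
      exact ⟨hv, by omega, fun x hx => by have := (hb x hx).2; omega⟩
    · intro x hx
      rcases List.mem_cons.mp hx with rfl | hx
      · omega
      · have := hb x hx; omega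

lemma segA_sh : ∀ d, shN (segA d) = sumN (segC d) := by
  intro d
  induction d with
  | zero => rfl
  | succ d ih =>
    have e1 : shN (segA (d+1)) = narayana (3*d+4) + shN (segA d) := by
      simp only [segA, shN, List.map, List.sum_cons]
      congr 2 <;> omega
    have e2 : sumN (segC (d+1)) = narayana (3*d+4) + sumN (segC d) := by
      simp [segC, sumN]
    omega

lemma segB_sh : ∀ d, shN (segB d) = sumN (segC d) := by
  intro d
  induction d with
  | zero => rfl
  | succ d ih =>
    have e1 : shN (segB (d+1)) = narayana (3*d+4) + shN (segB d) := by
      simp only [segB, shN, List.map, List.sum_cons]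
      congr 2 <;> omega
    have e2 : sumN (segC (d+1)) = narayana (3*d+4) + sumN (segC d) := by
      simp [segC, sumN]
    omega

lemma segC_sh : ∀ d, shN (segC d) = narayana (3*d+1) := by
  intro d
  induction d with
  | zero => rfl
  | succ d ih =>
    have e1 : shN (segC (d+1)) = narayana (3*d+3) + shN (segC d) := by
      simp only [segC, shN, List.map, List.sum_cons]
      congr 2 <;> omega
    have hs : narayana (3*d+4) = narayana (3*d+3) + narayana (3*d+1) := by
      have := h_succ (3*d+3) (by omega)
      have e2 : (3*d+3-2:ℕ) = 3*d+1 := by omega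
      rw [e2] at this
      exact this
    have e3 : (3*(d+1)+1:ℕ) = 3*d+4 := by omega
    rw [e3]
    omega

lemma segA_head : ∀ d, (segA d).head? = some (3*d+2) := by
  intro d
  match d with
  | 0 => rfl
  | (d+1) => simp [segA]; omega

/-- bottom-chain decomposition -/
lemma dec : ∀ (K : List ℕ) (d : ℕ), Valid (K ++ segA d) →
    ∃ M d', K ++ segA d = M ++ segA d' ∧ Valid M ∧ ∀ x ∈ M, 3*d'+6 ≤ x := by
  intro K
  induction K using List.reverseRecOn with
  | nil =>
    intro d hv
    exact ⟨[], d, by simp, valid_nil, by simp⟩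
  | append_singleton K a ih =>
    intro d hv
    have hva : Valid ((K ++ [a]) ++ segA d) := hv
    rw [valid_append_iff] at hva
    obtain ⟨hKa, hsA, hjun⟩ := hva
    have hhead : (3*d+2) ∈ segA d := by
      have := segA_head d
      match hA : segA d, this with
      | (x :: t), h => simp at h; simp [h]
    have ha5 : 3*d + 5 ≤ a := hjun a (by simp) _ hhead
    rcases eq_or_lt_of_le ha5 with heq | hlt
    · -- a = 3d+5 : absorb into segment
      have e : (K ++ [a]) ++ segA d = K ++ segA (d+1) := by
        rw [← heq]
        simp [segA]
      rw [e] at hv ⊢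
      exact ih (d+1) hv
    · -- a ≥ 3d+6 : stop here
      refine ⟨K ++ [a], d, rfl, hKa, ?_⟩
      intro x hx
      rcases List.mem_append.mp hx with hx | hx
      · have := (List.pairwise_append.mp hKa.1).2.2 x hx a (by simp)
        omega
      · simp at hx; omega

def grep : ℕ → List ℕ
  | 0 => []
  | (n+1) => gk (n+1) :: grep ((n+1) - narayana (gk (n+1)))
  decreasing_by
    have := h_pos (gk (n+1)); omega

lemma grep_spec : ∀ n, Valid (grep n) ∧ sumN (grep n) = n := by
  intro n
  induction n using Nat.strong_induction_on with
  | _ n ih =>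
    match n with
    | 0 =>
      rw [show grep 0 = ([] : List ℕ) from by rw [grep]]
      exact ⟨valid_nil, rfl⟩
    | (n+1) =>
      set g := gk (n+1) with hg
      have hg1 : 1 ≤ g := gk_pos (n+1) (by omega)
      have hgle : narayana g ≤ n+1 := gk_le (n+1) (by omega)
      have hglt : n+1 < narayana (g+1) := gk_lt (n+1) (by omega)
      set n' := (n+1) - narayana g with hn'
      have hpos := h_pos g
      have hlt : n' < n+1 := by omega
      obtain ⟨hv', hs'⟩ := ih n' hlt
      have hE : grep (n+1) = g :: grep n' := by rw [grep]
      have hsucc : narayana (g+1) = narayana g + narayana (g-2) := h_succ g hg1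
      have hn'lt : n' < narayana (g-2) := by omega
      constructor
      · rw [hE, valid_cons_iff]
        refine ⟨hv', hg1, ?_⟩
        intro x hx
        -- grep n' nonempty → n' ≥ 1 and head is gk n'
        have hn'pos : 1 ≤ n' := by
          by_contra h
          have : n' = 0 := by omega
          rw [this] at hx
          simp [grep] at hx
        obtain ⟨m, hm⟩ : ∃ m, n' = m + 1 := ⟨n' - 1, by omega⟩
        have hE' : grep n' = gk n' :: grep (n' - narayana (gk n')) := by
          rw [hm]; rw [grep]
        have hgkle : narayana (gk n') ≤ n' := gk_le n' hn'pos
        have hgklt : narayana (gk n') < narayana (g-2) := by omega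
        have hgkg : gk n' < g - 2 := by
          by_contra h
          push_neg at h
          have := h_mono h
          omega
        have hgk1 : 1 ≤ gk n' := gk_pos n' hn'pos
        rw [hE'] at hx
        rcases List.mem_cons.mp hx with rfl | hx
        · omega
        · have := (valid_cons_iff _ _).mp (hE' ▸ hv')
          have := this.2.2 x hx
          omega
      · rw [hE]
        simp only [sumN, List.map, List.sum_cons]
        have : sumN (grep n') = n' := hs'
        simp only [sumN] at this
        omega

lemma valid_shift' (K : List ℕ) (c : ℕ) (hv : Valid K) (hb : ∀ x ∈ K, c + 2 ≤ x) :
    Valid (K.map (fun x => x-1)) ∧ ∀ x ∈ K.map (fun x => x-1), c + 1 ≤ x := by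
  refine ⟨valid_shift K hv (fun x hx => by have := hb x hx; omega), ?_⟩
  intro x hx
  rw [List.mem_map] at hx
  obtain ⟨y, hy, rfl⟩ := hx
  have := hb y hy; omega

lemma T_id : ∀ n, 1 ≤ n → T n + T (T (T (n - 1))) = n := by
  intro n hn
  obtain ⟨hvL, hsL⟩ := grep_spec n
  obtain hnil | ⟨K, r, hKr⟩ := List.eq_nil_or_concat (grep n)
  · rw [hnil] at hsL
    simp [sumN] at hsL
    omega
  rw [List.concat_eq_append] at hKr
  rw [hKr] at hvL hsL
  rw [valid_append_iff] at hvL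
  obtain ⟨hvK, hvr, hbK0⟩ := hvL
  have hr1 : 1 ≤ r := hvr.2 r (by simp)
  have hbK : ∀ x ∈ K, r + 3 ≤ x := fun x hx => hbK0 x hx r (by simp)
  have hvKr : Valid (K ++ [r]) := valid_append K [r] hvK hvr hbK0
  have hsum : sumN K + narayana r = n := by
    rw [sumN_append] at hsL
    simp [sumN] at hsL ⊢
    omega
  have hTn : T n = shN K + narayana (r-1) := by
    rw [← hsL]
    rw [T_split _ hvKr, shN_append]
    simp [shN]
  -- shifted copies of K
  obtain ⟨hvK1, hbK1⟩ := valid_shift' K (r+1) hvK (fun x hx => by have := hbK x hx; omega)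
  set K1 := K.map (fun x => x - 1) with hK1
  obtain ⟨hvK2, hbK2⟩ := valid_shift' K1 r hvK1 (fun x hx => by have := hbK1 x hx; omega)
  set K2 := K1.map (fun x => x - 1) with hK2
  have hsK1 : sumN K1 = shN K := sumN_shift K
  have hsK2 : sumN K2 = shN K1 := sumN_shift K1
  have hsplit : shN K + shN K2 = sumN K :=
    sum_split K (fun x hx => by have := hbK x hx; omega)
  obtain rfl | hr2' | hr3 : r = 1 ∨ r = 2 ∨ 3 ≤ r := by omega
  · -- case r = 1
    have e0 : n - 1 = sumN K := by
      simp [narayana] at hsum; omega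
    have t1 : T (n-1) = sumN K1 := by
      rw [e0, T_split _ hvK, hsK1]
    have t2 : T (T (n-1)) = sumN K2 := by
      rw [t1, T_split _ hvK1, hsK2]
    have t3 : T (T (T (n-1))) = shN K2 := by
      rw [t2, T_split _ hvK2]
    rw [hTn, t3]
    simp only [Nat.sub_self, narayana] at hsum ⊢
    omega
  · -- case r = 2 : use bottom-chain decomposition
    subst hr2'
    have hA0 : K ++ [2] = K ++ segA 0 := rfl
    obtain ⟨M, d, heq, hvM, hbM⟩ := dec K 0 (hA0 ▸ hvKr)
    rw [← hA0] at heq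
    have hsMA : sumN M + sumN (segA d) = n := by
      rw [← hsL, heq, sumN_append]
    obtain ⟨hvA, hbA⟩ := segA_valid d
    obtain ⟨hvB, hbB⟩ := segB_valid d
    obtain ⟨hvC, hbC⟩ := segC_valid d
    obtain ⟨hvM1, hbM1⟩ := valid_shift' M (3*d+4) hvM (fun x hx => by have := hbM x hx; omega)
    set M1 := M.map (fun x => x - 1) with hM1
    obtain ⟨hvM2, hbM2⟩ := valid_shift' M1 (3*d+3) hvM1 (fun x hx => by have := hbM1 x hx; omega)
    set M2 := M1.map (fun x => x - 1) with hM2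
    have hsM1 : sumN M1 = shN M := sumN_shift M
    have hsM2 : sumN M2 = shN M1 := sumN_shift M1
    have hsplitM : shN M + shN M2 = sumN M :=
      sum_split M (fun x hx => by have := hbM x hx; omega)
    have hsegA := segA_sum d
    have hsegB := segB_sum d
    have hsegC := segC_sum d
    have hTn' : T n = shN M + sumN (segC d) := by
      rw [← hsL, heq, T_split _ (heq ▸ hvKr), shN_append, segA_sh]
    have e0 : n - 1 = sumN (M ++ segB d) := by
      rw [sumN_append]
      omega
    have hvMB : Valid (M ++ segB d) := by
      apply valid_append _ _ hvM hvB
      intro x hx y hy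
      have := hbM x hx; have := hbB y hy; omega
    have t1 : T (n-1) = sumN (M1 ++ segC d) := by
      rw [e0, T_split _ hvMB, shN_append, segB_sh, sumN_append, hsM1]
    have hvMC : Valid (M1 ++ segC d) := by
      apply valid_append _ _ hvM1 hvC
      intro x hx y hy
      have := hbM1 x hx; have := hbC y hy; omega
    have t2 : T (T (n-1)) = sumN (M2 ++ [3*d+1]) := by
      rw [t1, T_split _ hvMC, shN_append, segC_sh, sumN_append, hsM2]
      simp [sumN]
    have hvM2s : Valid (M2 ++ [3*d+1]) := by
      apply valid_append _ _ hvM2 ⟨by simp, by simp⟩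
      intro x hx y hy
      have := hbM2 x hx
      simp at hy
      omega
    have t3 : T (T (T (n-1))) = shN M2 + narayana (3*d) := by
      rw [t2, T_split _ hvM2s, shN_append]
      simp [shN]
    have hkey : narayana (3*d+3) = narayana (3*d+2) + narayana (3*d) := by
      have := h_succ (3*d+2) (by omega)
      have e : (3*d+2-2:ℕ) = 3*d := by omega
      rw [e] at this
      exact this
    rw [hTn', t3]
    omega
  · -- case r ≥ 3
    obtain ⟨hvch, hbch⟩ := chain_valid r
    obtain ⟨hvc1, hbc1⟩ := W2 r hr3
    obtain ⟨hvc2, hbc2⟩ := W4 r hr3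
    have hcs := chain_sum r
    have e0 : n - 1 = sumN (K ++ chain r) := by
      rw [sumN_append]
      have := h_pos r
      omega
    have hvKch : Valid (K ++ chain r) := by
      apply valid_append _ _ hvK hvch
      intro x hx y hy
      have := hbK x hx; have := hbch y hy; omega
    have t1 : T (n-1) = sumN (K1 ++ ch1 r) := by
      rw [e0, T_split _ hvKch, shN_append, W1 r hr3, sumN_append, hsK1]
    have hvK1c : Valid (K1 ++ ch1 r) := by
      apply valid_append _ _ hvK1 hvc1
      intro x hx y hy
      have := hbK1 x hx; have := hbc1 y hy; omega
    have t2 : T (T (n-1)) = sumN (K2 ++ ch2 r) := by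
      rw [t1, T_split _ hvK1c, shN_append, W3 r hr3, sumN_append, hsK2]
    have hvK2c : Valid (K2 ++ ch2 r) := by
      apply valid_append _ _ hvK2 hvc2
      intro x hx y hy
      have := hbK2 x hx; have := hbc2 y hy; omega
    have t3 : T (T (T (n-1))) = shN K2 + narayana (r-3) := by
      rw [t2, T_split _ hvK2c, shN_append, W5 r hr3]
    have hkey := h_split r (by omega)
    rw [hTn, t3]
    omega

lemma T_one : T 1 = 1 := by
  have hv : Valid [1] := ⟨by simp, by simp⟩
  have := T_split [1] hv
  simpa [sumN, shN, narayana] using this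

lemma H_eq_T (H : ℕ → ℕ) (hH1 : H 1 = 1)
    (hrec : ∀ n, 1 < n → H n + H (H (H (n-1))) = n) :
    ∀ n, 1 ≤ n → H n = T n := by
  intro n
  induction n using Nat.strong_induction_on with
  | _ n ih =>
    intro hn
    rcases eq_or_lt_of_le hn with h1 | h2
    · rw [← h1, hH1, T_one]
    · have ha : 1 ≤ n - 1 := by omega
      have e1 : H (n-1) = T (n-1) := ih (n-1) (by omega) ha
      have hb1 : 1 ≤ T (n-1) := T_pos _ ha
      have hb2 : T (n-1) < n := by have := T_le (n-1); omega
      have e2 : H (T (n-1)) = T (T (n-1)) := ih _ hb2 hb1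
      have hc1 : 1 ≤ T (T (n-1)) := T_pos _ hb1
      have hc2 : T (T (n-1)) < n := by have := T_le (T (n-1)); omega
      have e3 : H (T (T (n-1))) = T (T (T (n-1))) := ih _ hc2 hc1
      have hr := hrec n h2
      rw [e1, e2, e3] at hr
      have := T_id n hn
      omega

lemma list_sum_range (f : ℕ → ℕ) : ∀ m, ((List.range m).map f).sum = ∑ j ∈ Finset.range m, f j := by
  intro m
  induction m with
  | zero => simp
  | succ m ih => rw [List.range_succ, Finset.sum_range_succ]; simp [ih]

end HNar

/-- Let `n ≥ 1` and let `n = h (k 0) + h (k 1) + ⋯ + h (k (m-1))`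
be the greedy Narayana representation of `n`: at each step `k j` is the largest
index (among indices `≥ 1`) whose Narayana number is at most the remainder
`n - (h (k 0) + ⋯ + h (k (j-1)))`.  Then consecutive indices differ by at least `3`,
and `H n = h (k 0 - 1) + ⋯ + h (k (m-1) - 1)` (with `h 0 = 1`): `H n` is the right
shift of the digits of `n` in the Narayana base.  Here `H` is the Hofstadter `H`
sequence, characterized by `H 1 = 1` and `H n + H (H (H (n-1))) = n` for `n > 1`. -/
theorem hofstadter_H_right_shift_narayana
    (H : ℕ → ℕ) (hH1 : H 1 = 1)
    (hHrec : ∀ n, 1 < n → H n + H (H (H (n - 1))) = n)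
    (n : ℕ) (hn : 1 ≤ n) (m : ℕ) (hm : 1 ≤ m) (k : ℕ → ℕ)
    (hkpos : ∀ j, j < m → 1 ≤ k j)
    (hsum : n = ∑ j ∈ Finset.range m, narayana (k j))
    (hgreedy : ∀ j, j < m →
      narayana (k j) ≤ n - ∑ i ∈ Finset.range j, narayana (k i) ∧
      ∀ t, 1 ≤ t → narayana t ≤ n - ∑ i ∈ Finset.range j, narayana (k i) →
        t ≤ k j) :
    (∀ j, j + 1 < m → k (j + 1) + 3 ≤ k j) ∧
    H n = ∑ j ∈ Finset.range m, narayana (k j - 1) := by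
  have hstep : ∀ j, j + 1 < m → k (j + 1) + 3 ≤ k j := by
    intro j hj
    have hj1 : j < m := by omega
    have h1 := hgreedy j hj1
    have h2 := hgreedy (j+1) hj
    have hPsucc : (∑ i ∈ Finset.range (j+1), narayana (k i)) =
        (∑ i ∈ Finset.range j, narayana (k i)) + narayana (k j) :=
      Finset.sum_range_succ _ j
    have hPle : (∑ i ∈ Finset.range (j+1), narayana (k i)) ≤ n := by
      rw [hsum]
      apply Finset.sum_le_sum_of_subset
      exact Finset.range_subset_range.mpr (by omega)
    have hlt : narayana (k j + 1) > n - (∑ i ∈ Finset.range j, narayana (k i)) := by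
      by_contra h
      push_neg at h
      have := h1.2 (k j + 1) (by omega) h
      omega
    have hks := HNar.h_succ (k j) (hkpos j hj1)
    have hA := h2.1
    rw [hPsucc] at hA hPle
    have hAC : narayana (k (j+1)) < narayana (k j - 2) := by omega
    by_contra hcon
    push_neg at hcon
    have hle : k j - 2 ≤ k (j+1) := by omega
    have := HNar.h_mono hle
    omega
  refine ⟨hstep, ?_⟩
  have hanti : ∀ i j, i < j → j < m → k j + 3 ≤ k i := by
    intro i j hij hjm
    induction j with
    | zero => omega
    | succ j ihj =>
      have h1 := hstep j (by omega)
      rcases Nat.lt_or_ge i j with hlt | hge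
      · have := ihj hlt (by omega); omega
      · have : i = j := by omega
        subst this; omega
  set LL := (List.range m).map k with hLL
  have hvLL : HNar.Valid LL := by
    constructor
    · rw [hLL, List.pairwise_map]
      have hpr : (List.range m).Pairwise (· < ·) := List.pairwise_lt_range
      refine hpr.imp_of_mem ?_
      intro a b ha hb hab
      exact hanti a b hab (List.mem_range.mp hb)
    · intro x hx
      rw [hLL, List.mem_map] at hx
      obtain ⟨j, hj, rfl⟩ := hx
      exact hkpos j (List.mem_range.mp hj)
  have hsLL : HNar.sumN LL = n := by
    rw [hLL, HNar.sumN, List.map_map, HNar.list_sum_range]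
    exact hsum.symm
  have hshLL : HNar.shN LL = ∑ j ∈ Finset.range m, narayana (k j - 1) := by
    rw [hLL, HNar.shN, List.map_map, HNar.list_sum_range]
    rfl
  rw [HNar.H_eq_T H hH1 hHrec n hn, ← hsLL, HNar.T_split LL hvLL, hshLL]
end

section
/- Let β = m_0 + m_1·α + m_2·α² where m_0, m_1, m_2 are integers (i.e., β ∈ ℤ[α]). Then ‖β·h(k)‖ decreases exponentially as k → ∞: there exist a constant C > 0 and a real number 0 < ρ < 1 such that ‖β·h(k)‖ ≤ C·ρ^k for all k ≥ 1. -/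
/-- Distance from a real number to the nearest integer. -/
noncomputable def distToInt (x : ℝ) : ℝ := |x - round x|

lemma narayana_rec (m : ℕ) : narayana (m + 3) = narayana (m + 2) + narayana m := by
  cases m with
  | zero => rfl
  | succ n => rfl

lemma distToInt_le (x : ℝ) (n : ℤ) : distToInt x ≤ |x - n| := round_le x n

/-- Let `α` be the (unique) real root of `x³ + x = 1` and let
`β = m₀ + m₁·α + m₂·α² ∈ ℤ[α]`.  Then `‖β · h k‖` decreases exponentially:
there are `C > 0` and `0 < ρ < 1` with `‖β · h k‖ ≤ C · ρ ^ k` for all `k ≥ 1`. -/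
theorem distToInt_narayana_exponential_decay
    (α : ℝ) (hα : α ^ 3 + α = 1) (m0 m1 m2 : ℤ) :
    ∃ C : ℝ, 0 < C ∧ ∃ ρ : ℝ, 0 < ρ ∧ ρ < 1 ∧
      ∀ k : ℕ, 1 ≤ k →
        distToInt (((m0 : ℝ) + (m1 : ℝ) * α + (m2 : ℝ) * α ^ 2) * (narayana k : ℝ))
          ≤ C * ρ ^ k := by
  have hα0 : 0 < α := by nlinarith [sq_nonneg α, sq_nonneg (α - 1), sq_nonneg (α + 1)]
  have hα1 : α < 1 := by
    by_contra hcon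
    push_neg at hcon
    nlinarith [mul_nonneg (mul_nonneg (sub_nonneg.mpr hcon) hα0.le) hα0.le,
      mul_nonneg (sub_nonneg.mpr hcon) hα0.le]
  set ρ : ℝ := Real.sqrt α with hρdef
  have hρ0 : 0 < ρ := Real.sqrt_pos.mpr hα0
  have hρ1 : ρ < 1 := by
    rw [hρdef, show (1 : ℝ) = Real.sqrt 1 by simp]
    exact Real.sqrt_lt_sqrt hα0.le hα1
  -- the error sequence
  set X : ℕ → ℝ := fun k => α * narayana (k + 1) - narayana k with hXdef
  have hX : ∀ k, X (k + 2) = -α ^ 2 * X (k + 1) - α * X k := by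
    intro k
    have h3 : (narayana (k + 3) : ℝ) = narayana (k + 2) + narayana k := by
      exact_mod_cast narayana_rec k
    simp only [hXdef]
    push_cast
    linear_combination α * h3 + (narayana (k + 2) : ℝ) * hα
  -- Lyapunov energy
  set E : ℕ → ℝ := fun k => X (k + 1) ^ 2 + α ^ 2 * X (k + 1) * X k + α * X k ^ 2 with hEdef
  have hE : ∀ k, E (k + 1) = α * E k := by
    intro k
    simp only [hEdef]
    rw [hX k]
    ring
  have hEk : ∀ k, E k = α ^ k * E 0 := by
    intro k
    induction k with
    | zero => simp
    | succ n ih => rw [hE n, ih]; ring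
  have hc : 0 < α - α ^ 4 / 4 := by nlinarith
  set c : ℝ := α - α ^ 4 / 4 with hcdef
  have hEpos : ∀ k, c * X k ^ 2 ≤ E k := by
    intro k
    have h : E k = (X (k + 1) + α ^ 2 / 2 * X k) ^ 2 + c * X k ^ 2 := by
      simp only [hEdef, hcdef]; ring
    rw [h]
    nlinarith [sq_nonneg (X (k + 1) + α ^ 2 / 2 * X k)]
  have hE00 : 0 ≤ E 0 / c := by
    have := hEpos 0
    have h0 : 0 ≤ E 0 := le_trans (by positivity) this
    positivity
  set D : ℝ := Real.sqrt (E 0 / c) with hDdef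
  have hD0 : 0 ≤ D := Real.sqrt_nonneg _
  have hXb : ∀ k, |X k| ≤ D * ρ ^ k := by
    intro k
    have h1 : X k ^ 2 ≤ α ^ k * (E 0 / c) := by
      have := hEpos k
      rw [hEk k] at this
      rw [show α ^ k * (E 0 / c) = α ^ k * E 0 / c from (mul_div_assoc _ _ _).symm,
        le_div_iff₀ hc]
      linear_combination this
    calc |X k| = Real.sqrt (X k ^ 2) := (Real.sqrt_sq_eq_abs _).symm
      _ ≤ Real.sqrt (α ^ k * (E 0 / c)) := Real.sqrt_le_sqrt h1
      _ = Real.sqrt (α ^ k) * D := by rw [Real.sqrt_mul (by positivity)]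
      _ = ρ ^ k * D := by
            congr 1
            have hsq : (ρ ^ k) ^ 2 = α ^ k := by
              rw [← pow_mul, mul_comm, pow_mul, Real.sq_sqrt hα0.le]
            rw [← hsq, Real.sqrt_sq (by positivity)]
      _ = D * ρ ^ k := by ring
  -- assemble the final bound
  set A : ℝ := ((|(m1 : ℝ)| + 2 * |(m2 : ℝ)|) * D) / ρ ^ 2 with hAdef
  have hA0 : 0 ≤ A := by positivity
  refine ⟨A + 1 / (2 * ρ) + 1, by positivity, ρ, hρ0, hρ1, ?_⟩
  intro k hk
  match k, hk with
  | 1, _ =>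
    have h12 : distToInt (((m0 : ℝ) + (m1 : ℝ) * α + (m2 : ℝ) * α ^ 2) * (narayana 1 : ℝ))
        ≤ 1 / 2 := abs_sub_round _
    have : 1 / 2 = (1 / (2 * ρ)) * ρ ^ 1 := by field_simp
    rw [pow_one]
    calc distToInt _ ≤ 1 / 2 := h12
      _ = (1 / (2 * ρ)) * ρ := by field_simp
      _ ≤ (A + 1 / (2 * ρ) + 1) * ρ := by
          apply mul_le_mul_of_nonneg_right _ hρ0.le
          nlinarith
  | (j + 2), _ =>
    set N : ℤ := m0 * narayana (j + 2) + m1 * narayana (j + 1) + m2 * narayana j with hNdef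
    have key : ((m0 : ℝ) + (m1 : ℝ) * α + (m2 : ℝ) * α ^ 2) * (narayana (j + 2) : ℝ) - (N : ℝ)
        = ((m1 : ℝ) + (m2 : ℝ) * α) * X (j + 1) + (m2 : ℝ) * X j := by
      simp only [hNdef, hXdef]
      push_cast
      ring
    have habs1 : |(m1 : ℝ) + (m2 : ℝ) * α| ≤ |(m1 : ℝ)| + |(m2 : ℝ)| := by
      calc |(m1 : ℝ) + (m2 : ℝ) * α| ≤ |(m1 : ℝ)| + |(m2 : ℝ) * α| := abs_add_le _ _
        _ = |(m1 : ℝ)| + |(m2 : ℝ)| * |α| := by rw [abs_mul]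
        _ ≤ |(m1 : ℝ)| + |(m2 : ℝ)| := by
            have : |α| ≤ 1 := by rw [abs_of_pos hα0]; exact hα1.le
            nlinarith [abs_nonneg (m2 : ℝ)]
    have hXj1 := hXb (j + 1)
    have hXj := hXb j
    have hρj : (0:ℝ) ≤ ρ ^ j := by positivity
    have hρj1 : ρ ^ (j + 1) ≤ ρ ^ j := by
      rw [pow_succ]
      nlinarith
    calc distToInt (((m0 : ℝ) + (m1 : ℝ) * α + (m2 : ℝ) * α ^ 2) * (narayana (j + 2) : ℝ))
        ≤ |((m0 : ℝ) + (m1 : ℝ) * α + (m2 : ℝ) * α ^ 2) * (narayana (j + 2) : ℝ) - (N : ℝ)| :=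
          distToInt_le _ N
      _ = |((m1 : ℝ) + (m2 : ℝ) * α) * X (j + 1) + (m2 : ℝ) * X j| := by rw [key]
      _ ≤ |((m1 : ℝ) + (m2 : ℝ) * α)| * |X (j + 1)| + |(m2 : ℝ)| * |X j| := by
          calc _ ≤ |((m1 : ℝ) + (m2 : ℝ) * α) * X (j + 1)| + |(m2 : ℝ) * X j| := abs_add_le _ _
            _ = _ := by rw [abs_mul, abs_mul]
      _ ≤ (|(m1 : ℝ)| + |(m2 : ℝ)|) * (D * ρ ^ (j + 1)) + |(m2 : ℝ)| * (D * ρ ^ j) := by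
          have h1 : |(m1 : ℝ) + (m2 : ℝ) * α| * |X (j + 1)|
              ≤ (|(m1 : ℝ)| + |(m2 : ℝ)|) * (D * ρ ^ (j + 1)) :=
            mul_le_mul habs1 hXj1 (abs_nonneg _) (by positivity)
          have h2 : |(m2 : ℝ)| * |X j| ≤ |(m2 : ℝ)| * (D * ρ ^ j) :=
            mul_le_mul_of_nonneg_left hXj (abs_nonneg _)
          linarith
      _ ≤ (|(m1 : ℝ)| + 2 * |(m2 : ℝ)|) * D * ρ ^ j := by
          have hD1 : D * ρ ^ (j + 1) ≤ D * ρ ^ j := mul_le_mul_of_nonneg_left hρj1 hD0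
          have h1 : (|(m1 : ℝ)| + |(m2 : ℝ)|) * (D * ρ ^ (j + 1))
              ≤ (|(m1 : ℝ)| + |(m2 : ℝ)|) * (D * ρ ^ j) :=
            mul_le_mul_of_nonneg_left hD1 (by positivity)
          calc (|(m1 : ℝ)| + |(m2 : ℝ)|) * (D * ρ ^ (j + 1)) + |(m2 : ℝ)| * (D * ρ ^ j)
              ≤ (|(m1 : ℝ)| + |(m2 : ℝ)|) * (D * ρ ^ j) + |(m2 : ℝ)| * (D * ρ ^ j) := by
                linarith
            _ = (|(m1 : ℝ)| + 2 * |(m2 : ℝ)|) * D * ρ ^ j := by ring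
      _ = A * ρ ^ (j + 2) := by
          rw [hAdef]
          field_simp
          ring
      _ ≤ (A + 1 / (2 * ρ) + 1) * ρ ^ (j + 2) := by
          apply mul_le_mul_of_nonneg_right _ (by positivity)
          have : 0 < 1 / (2 * ρ) := by positivity
          linarith
end

section
/- If β is a real number such that ‖β·h(k)‖ → 0 as k → ∞, then β ∈ ℤ[α]; that is, there exist integers m_0, m_1, m_2 such that β = m_0 + m_1·α + m_2·α². -/
lemma nar_rec (k : ℕ) : narayana (k+3) = narayana (k+2) + narayana k := by
  match k with
  | 0 => rfl
  | n+1 => rfl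

lemma nar_pos : ∀ k, 1 ≤ narayana k := by
  have H : ∀ k, 1 ≤ narayana k ∧ 1 ≤ narayana (k+1) ∧ 1 ≤ narayana (k+2) := by
    intro k
    induction k with
    | zero => exact ⟨le_refl _, by norm_num [narayana], by norm_num [narayana]⟩
    | succ n ih =>
      refine ⟨ih.2.1, ih.2.2, ?_⟩
      rw [show n+1+2 = n+3 from rfl, nar_rec]
      omega
  exact fun k => (H k).1

lemma nar_det (k : ℕ) :
    (narayana k : ℤ) * ((narayana (k+2) : ℤ) * narayana (k+4) - (narayana (k+3) : ℤ) * narayana (k+3))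
      - (narayana (k+1) : ℤ) * ((narayana (k+1) : ℤ) * narayana (k+4) - (narayana (k+2) : ℤ) * narayana (k+3))
      + (narayana (k+2) : ℤ) * ((narayana (k+1) : ℤ) * narayana (k+3) - (narayana (k+2) : ℤ) * narayana (k+2)) = -1 := by
  induction k with
  | zero => norm_num [narayana]
  | succ n ih =>
    have e3 : (narayana (n+3) : ℤ) = narayana (n+2) + narayana n := by exact_mod_cast nar_rec n
    have e4 : (narayana (n+4) : ℤ) = narayana (n+3) + narayana (n+1) := by
      exact_mod_cast (show narayana (n+4) = narayana (n+3) + narayana (n+1) from nar_rec (n+1))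
    have e5 : (narayana (n+5) : ℤ) = narayana (n+4) + narayana (n+2) := by
      exact_mod_cast (show narayana (n+5) = narayana (n+4) + narayana (n+2) from nar_rec (n+2))
    rw [e4, e3] at ih
    show (narayana (n+1) : ℤ) * ((narayana (n+3) : ℤ) * narayana (n+5) - (narayana (n+4) : ℤ) * narayana (n+4))
      - (narayana (n+2) : ℤ) * ((narayana (n+2) : ℤ) * narayana (n+5) - (narayana (n+3) : ℤ) * narayana (n+4))
      + (narayana (n+3) : ℤ) * ((narayana (n+2) : ℤ) * narayana (n+4) - (narayana (n+3) : ℤ) * narayana (n+3)) = -1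
    rw [e5, e4, e3]
    linear_combination ih

noncomputable def tseq (α : ℝ) (k : ℕ) : ℝ :=
  (narayana (k+1) : ℝ) - (α^2+1) * narayana k

noncomputable def Qseq (α : ℝ) (k : ℕ) : ℝ :=
  tseq α (k+1)^2 + α^2 * tseq α k * tseq α (k+1) + α * (tseq α k)^2

lemma tseq_rec (α : ℝ) (hα : α ^ 3 + α = 1) (k : ℕ) :
    tseq α (k+2) = -α^2 * tseq α (k+1) - α * tseq α k := by
  have e : (narayana (k+3) : ℝ) = narayana (k+2) + narayana k := by exact_mod_cast nar_rec k
  unfold tseq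
  rw [show k+2+1 = k+3 from rfl, show k+1+1 = k+2 from rfl, e]
  linear_combination (-(α * (narayana (k+1) : ℝ)) - (narayana k : ℝ)) * hα

lemma Qseq_rec (α : ℝ) (hα : α ^ 3 + α = 1) (k : ℕ) :
    Qseq α (k+1) = α * Qseq α k := by
  have e := tseq_rec α hα k
  unfold Qseq
  rw [show k+1+1 = k+2 from rfl]
  linear_combination (tseq α (k+2) - α * tseq α k) * e

lemma Qseq_eq (α : ℝ) (hα : α ^ 3 + α = 1) (k : ℕ) :
    Qseq α k = α ^ k * Qseq α 0 := by
  induction k with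
  | zero => simp
  | succ n ih => rw [Qseq_rec α hα n, ih]; ring

lemma tseq_tendsto (α : ℝ) (hα : α ^ 3 + α = 1) :
    Filter.Tendsto (tseq α) Filter.atTop (nhds 0) := by
  have hαpos : 0 < α := by nlinarith [sq_nonneg α, sq_nonneg (α+1), sq_nonneg (α-1)]
  have hα1 : α < 1 := by nlinarith [sq_nonneg α, sq_nonneg (α+1), sq_nonneg (α-1)]
  have ht2 : ∀ k, tseq α k ^ 2 ≤ 2/α * Qseq α k := by
    intro k
    rw [div_mul_eq_mul_div, le_div_iff₀ hαpos]
    unfold Qseq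
    have h4 : α^4 ≤ 2*α := by nlinarith
    nlinarith [sq_nonneg (tseq α (k+1) + α^2/2 * tseq α k), sq_nonneg (tseq α k), mul_nonneg (sub_nonneg.mpr h4) (sq_nonneg (tseq α k))]
  have hbound : Filter.Tendsto (fun k => 2/α * (α ^ k * Qseq α 0)) Filter.atTop (nhds 0) := by
    have := (tendsto_pow_atTop_nhds_zero_of_lt_one hαpos.le hα1).mul_const (Qseq α 0)
    have := this.const_mul (2/α)
    simpa using this
  have hsq : Filter.Tendsto (fun k => tseq α k ^ 2) Filter.atTop (nhds 0) := by
    refine squeeze_zero (fun k => sq_nonneg _) (fun k => ?_) hbound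
    rw [← Qseq_eq α hα k]; exact ht2 k
  have habs : Filter.Tendsto (fun k => |tseq α k|) Filter.atTop (nhds 0) := by
    have := (Real.continuous_sqrt.tendsto 0).comp hsq
    simpa [Function.comp_def, Real.sqrt_sq_eq_abs] using this
  exact squeeze_zero_norm (fun n => (Real.norm_eq_abs _).le) habs

/-- Let `α` be the (unique) real root of `x³ + x = 1`.  If `β` is
a real number such that `‖β · h k‖ → 0` as `k → ∞`, then `β ∈ ℤ[α]`: there exist
integers `m₀, m₁, m₂` with `β = m₀ + m₁·α + m₂·α²`. -/
theorem mem_Zalpha_of_distToInt_narayana_tendsto_zero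
    (α : ℝ) (hα : α ^ 3 + α = 1) (β : ℝ)
    (h : Filter.Tendsto (fun k : ℕ => distToInt (β * (narayana k : ℝ)))
      Filter.atTop (nhds 0)) :
    ∃ m0 m1 m2 : ℤ, β = (m0 : ℝ) + (m1 : ℝ) * α + (m2 : ℝ) * α ^ 2 := by
  obtain ⟨K, hK⟩ := Metric.tendsto_atTop.mp h (1/4) (by norm_num)
  set a : ℕ → ℤ := fun k => round (β * (narayana k : ℝ)) with ha_def
  have hdist : ∀ k, K ≤ k → |β * narayana k - (a k : ℝ)| < 1/4 := by
    intro k hk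
    have := hK k hk
    rw [Real.dist_eq, sub_zero] at this
    have h2 : distToInt (β * narayana k) < 1/4 := (le_abs_self _).trans_lt this
    simpa [distToInt, ha_def] using h2
  -- eventual recurrence for a
  have ha : ∀ k, K ≤ k → a (k+3) = a (k+2) + a k := by
    intro k hk
    have h3 := hdist (k+3) (by omega)
    have h2 := hdist (k+2) (by omega)
    have h0 := hdist k hk
    have hnar : (narayana (k+3) : ℝ) = narayana (k+2) + narayana k := by exact_mod_cast nar_rec k
    have e : ((a (k+3) - a (k+2) - a k : ℤ) : ℝ)
        = -(β * narayana (k+3) - a (k+3)) + (β * narayana (k+2) - a (k+2)) + (β * narayana k - a k) := by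
      push_cast
      rw [hnar]; ring
    have habs : |((a (k+3) - a (k+2) - a k : ℤ) : ℝ)| < 1 := by
      rw [e]
      calc |-(β * narayana (k+3) - a (k+3)) + (β * narayana (k+2) - a (k+2)) + (β * narayana k - a k)|
          ≤ |-(β * narayana (k+3) - a (k+3)) + (β * narayana (k+2) - a (k+2))| + |β * narayana k - a k| := abs_add_le _ _
        _ ≤ |-(β * narayana (k+3) - a (k+3))| + |β * narayana (k+2) - a (k+2)| + |β * narayana k - a k| := by
            gcongr; exact abs_add_le _ _
        _ < 1 := by rw [abs_neg]; linarith
    have hlt : |a (k+3) - a (k+2) - a k| < 1 := by exact_mod_cast habs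
    have := abs_lt.mp hlt
    omega
  -- Cramer's rule: integer coefficients p q r
  set p : ℤ := -( a K * ((narayana (K+2) : ℤ) * narayana (K+4) - (narayana (K+3) : ℤ) * narayana (K+3))
      - (narayana (K+1) : ℤ) * (a (K+1) * narayana (K+4) - a (K+2) * narayana (K+3))
      + (narayana (K+2) : ℤ) * (a (K+1) * narayana (K+3) - a (K+2) * narayana (K+2)) ) with hp_def
  set q : ℤ := -( (narayana K : ℤ) * (a (K+1) * narayana (K+4) - a (K+2) * narayana (K+3))
      - a K * ((narayana (K+1) : ℤ) * narayana (K+4) - (narayana (K+2) : ℤ) * narayana (K+3))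
      + (narayana (K+2) : ℤ) * ((narayana (K+1) : ℤ) * a (K+2) - (narayana (K+2) : ℤ) * a (K+1)) ) with hq_def
  set r : ℤ := -( (narayana K : ℤ) * ((narayana (K+2) : ℤ) * a (K+2) - (narayana (K+3) : ℤ) * a (K+1))
      - (narayana (K+1) : ℤ) * ((narayana (K+1) : ℤ) * a (K+2) - (narayana (K+2) : ℤ) * a (K+1))
      + a K * ((narayana (K+1) : ℤ) * narayana (K+3) - (narayana (K+2) : ℤ) * narayana (K+2)) ) with hr_def
  have hdet := nar_det K
  have hP0 : a K = p * narayana K + q * narayana (K+1) + r * narayana (K+2) := by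
    rw [hp_def, hq_def, hr_def]
    linear_combination (a K) * hdet
  have hP1 : a (K+1) = p * narayana (K+1) + q * narayana (K+2) + r * narayana (K+3) := by
    rw [hp_def, hq_def, hr_def]
    linear_combination (a (K+1)) * hdet
  have hP2 : a (K+2) = p * narayana (K+2) + q * narayana (K+3) + r * narayana (K+4) := by
    rw [hp_def, hq_def, hr_def]
    linear_combination (a (K+2)) * hdet
  -- extend to all k ≥ K
  have key : ∀ n : ℕ,
      (a (K+n) = p * narayana (K+n) + q * narayana (K+n+1) + r * narayana (K+n+2)) ∧
      (a (K+n+1) = p * narayana (K+n+1) + q * narayana (K+n+2) + r * narayana (K+n+3)) ∧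
      (a (K+n+2) = p * narayana (K+n+2) + q * narayana (K+n+3) + r * narayana (K+n+4)) := by
    intro n
    induction n with
    | zero => exact ⟨hP0, hP1, hP2⟩
    | succ n ih =>
      refine ⟨ih.2.1, ih.2.2, ?_⟩
      show a (K+n+3) = p * narayana (K+n+3) + q * narayana (K+n+4) + r * narayana (K+n+5)
      have e3 : (narayana (K+n+3) : ℤ) = narayana (K+n+2) + narayana (K+n) := by
        exact_mod_cast nar_rec (K+n)
      have e4 : (narayana (K+n+4) : ℤ) = narayana (K+n+3) + narayana (K+n+1) := by
        exact_mod_cast (show narayana (K+n+4) = narayana (K+n+3) + narayana (K+n+1) from nar_rec (K+n+1))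
      have e5 : (narayana (K+n+5) : ℤ) = narayana (K+n+4) + narayana (K+n+2) := by
        exact_mod_cast (show narayana (K+n+5) = narayana (K+n+4) + narayana (K+n+2) from nar_rec (K+n+2))
      have hrecA : a (K+n+3) = a (K+n+2) + a (K+n) := ha (K+n) (Nat.le_add_right K n)
      have ih1 := ih.1
      have ih3 := ih.2.2
      rw [hrecA, e5, e4, e3]
      rw [e4, e3] at ih3
      linear_combination ih1 + ih3
  -- limit argument
  have hαpos : 0 < α := by nlinarith [sq_nonneg α, sq_nonneg (α+1), sq_nonneg (α-1)]
  have hshift : Filter.Tendsto (fun n : ℕ => K + n) Filter.atTop Filter.atTop :=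
    Filter.tendsto_atTop_mono (fun n => Nat.le_add_left n K) Filter.tendsto_id
  have hshift1 : Filter.Tendsto (fun n : ℕ => K + n + 1) Filter.atTop Filter.atTop :=
    Filter.tendsto_atTop_mono (fun n => le_trans (Nat.le_add_left n K) (Nat.le_succ _)) Filter.tendsto_id
  have hε : Filter.Tendsto (fun n => β * narayana (K+n) - (a (K+n) : ℝ)) Filter.atTop (nhds 0) := by
    refine squeeze_zero_norm (fun n => ?_) (h.comp hshift)
    show ‖β * narayana (K+n) - (a (K+n) : ℝ)‖ ≤ distToInt (β * narayana (K+n))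
    rw [Real.norm_eq_abs]
    simp [distToInt, ha_def]
  have hT : Filter.Tendsto (fun n => tseq α (K+n)) Filter.atTop (nhds 0) :=
    (tseq_tendsto α hα).comp hshift
  have hT1 : Filter.Tendsto (fun n => tseq α (K+n+1)) Filter.atTop (nhds 0) :=
    (tseq_tendsto α hα).comp hshift1
  set d : ℝ := β - ((p : ℝ) + (q : ℝ) * (α^2+1) + (r : ℝ) * (1+α+α^2)) with hd_def
  have heq : ∀ n, d * narayana (K+n)
      = (β * narayana (K+n) - (a (K+n) : ℝ))
        + (q : ℝ) * tseq α (K+n)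
        + (r : ℝ) * (tseq α (K+n+1) + (α^2+1) * tseq α (K+n)) := by
    intro n
    have kn : ((a (K+n) : ℤ) : ℝ) = (p : ℝ) * narayana (K+n) + (q : ℝ) * narayana (K+n+1) + (r : ℝ) * narayana (K+n+2) := by
      exact_mod_cast (key n).1
    rw [hd_def]
    simp only [tseq]
    rw [show K+n+1+1 = K+n+2 from rfl]
    linear_combination kn + (r : ℝ) * (narayana (K+n) : ℝ) * α * hα
  have hg : Filter.Tendsto (fun n => d * narayana (K+n)) Filter.atTop (nhds 0) := by
    have big := hε.add ((hT.const_mul (q : ℝ)).add ((hT1.add (hT.const_mul ((α:ℝ)^2+1))).const_mul (r : ℝ)))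
    have big' : Filter.Tendsto (fun n => (β * narayana (K+n) - (a (K+n) : ℝ))
        + (q : ℝ) * tseq α (K+n)
        + (r : ℝ) * (tseq α (K+n+1) + (α^2+1) * tseq α (K+n))) Filter.atTop (nhds 0) := by
      simpa [add_assoc] using big
    exact big'.congr (fun n => (heq n).symm)
  have hd0 : d = 0 := by
    by_contra hne
    obtain ⟨N, hN⟩ := Metric.tendsto_atTop.mp hg |d| (abs_pos.mpr hne)
    have h1 : |d * narayana (K+N)| < |d| := by
      have := hN N le_rfl
      rwa [Real.dist_eq, sub_zero] at this
    have h2 : |d| ≤ |d * narayana (K+N)| := by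
      rw [abs_mul]
      have hn1 : (1 : ℝ) ≤ |(narayana (K+N) : ℝ)| := by
        rw [abs_of_nonneg (by positivity)]
        exact_mod_cast nar_pos (K+N)
      nlinarith [abs_nonneg d]
    linarith
  refine ⟨p + q + r, r, q + r, ?_⟩
  have hβ : β = (p : ℝ) + (q : ℝ) * (α^2+1) + (r : ℝ) * (1+α+α^2) := by
    have := hd0
    rw [hd_def] at this
    linarith
  rw [hβ]
  push_cast
  ring
end

section
/- Let a be a sequence of mild signature, b : ℕ → ℤ any sequence of integers, and A the replacement sequence of a by b. If γ is a real number such that ∑_{i=1}^{∞} ‖γ·b(i)‖ < ∞, then the sequence of Weyl sums x_N = (1/N)·∑_{n=0}^{N−1} e(γ·A(n)) converges to some complex number as N → ∞. -/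
open Filter

/-- `e x = exp (2 π i x)`. -/
noncomputable def expCirc (x : ℝ) : ℂ := Complex.exp (2 * Real.pi * Complex.I * x)

/-- Auxiliary fueled greedy algorithm: given the base sequence `a` and a remainder `r`,
repeatedly subtract the largest `a i` (with `i ≥ 1`) not exceeding the remainder,
recording the list of indices used (with multiplicity). -/
def greedyIdxAux (a : ℕ → ℕ) : ℕ → ℕ → List ℕ
  | 0, _ => []
  | fuel + 1, r =>
    if r = 0 then []
    else
      let i := Nat.findGreatest (fun j => 1 ≤ j ∧ a j ≤ r) r
      i :: greedyIdxAux a fuel (r - a i)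

/-- The list of indices (with multiplicity) appearing in the greedy representation
of `n` in base `a`: `n = ∑_{i ∈ greedyIdx a n} a i`, where at each step the largest
`a i` not exceeding the remainder is subtracted. -/
def greedyIdx (a : ℕ → ℕ) (n : ℕ) : List ℕ := greedyIdxAux a n n

/-- Auxiliary fueled greedy algorithm with the indices capped by `cap`. -/
def greedyIdxCapAux (a : ℕ → ℕ) (cap : ℕ) : ℕ → ℕ → List ℕ
  | 0, _ => []
  | fuel + 1, r =>
    if r = 0 then []
    else
      let i := Nat.findGreatest (fun j => 1 ≤ j ∧ j ≤ cap ∧ a j ≤ r) r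
      i :: greedyIdxCapAux a cap fuel (r - a i)

/-- The greedy representation of `n` in base `a` using only indices `≤ cap`. -/
def greedyIdxCap (a : ℕ → ℕ) (cap n : ℕ) : List ℕ := greedyIdxCapAux a cap n n

/-- A strictly increasing sequence `a` with `a 1 = 1` has *mild signature* if:
(i) there is a constant `L` such that for every `n ≥ 2` the greedy representation
of `a n` in base `a` using only earlier terms `a 1, …, a (n-1)` only uses the
terms `a (n-1), …, a (n-L)`; and (ii) there are reals `r, s > 1` with
`r · a n < a (n+1) < s · a n` for every `n ≥ 1`. -/
structure MildSignature (a : ℕ → ℕ) : Prop where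
  a_one : a 1 = 1
  mono : ∀ n, 1 ≤ n → a n < a (n + 1)
  signature : ∃ L : ℕ, ∀ n, 2 ≤ n → ∀ i ∈ greedyIdxCap a (n - 1) (a n), n ≤ i + L
  growth : ∃ r s : ℝ, 1 < r ∧ 1 < s ∧ ∀ n, 1 ≤ n →
    r * (a n : ℝ) < (a (n + 1) : ℝ) ∧ (a (n + 1) : ℝ) < s * (a n : ℝ)

/-- The replacement sequence of `a` by `b`: write `n` greedily in base `a` and
replace each occurrence of `a i` by `b i`. -/
def replSeq (a : ℕ → ℕ) (b : ℕ → ℤ) (n : ℕ) : ℤ := ((greedyIdx a n).map b).sum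

set_option linter.unusedSectionVars false

section Greedy

variable {a : ℕ → ℕ} (ha1 : a 1 = 1) (hmono : ∀ n, 1 ≤ n → a n < a (n + 1))

include ha1 hmono

lemma a_mono : ∀ {i j : ℕ}, 1 ≤ i → i ≤ j → a i ≤ a j := by
  intro i j hi hij
  induction j with
  | zero => omega
  | succ j ih =>
    rcases Nat.lt_or_ge i (j+1) with h | h
    · exact le_trans (ih (by omega)) (le_of_lt (hmono j (by omega)))
    · have : i = j + 1 := by omega
      subst this; rfl

lemma a_strict : ∀ {i j : ℕ}, 1 ≤ i → i < j → a i < a j := by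
  intro i j hi hij
  calc a i < a (i+1) := hmono i hi
    _ ≤ a j := a_mono ha1 hmono (by omega) hij

lemma one_le_a : ∀ {i : ℕ}, 1 ≤ i → 1 ≤ a i := by
  intro i hi; have := a_mono ha1 hmono (le_refl 1) hi; omega

lemma le_a : ∀ {i : ℕ}, 1 ≤ i → i ≤ a i := by
  intro i hi
  induction i with
  | zero => omega
  | succ i ih =>
    rcases Nat.eq_or_lt_of_le hi with h | h
    · rw [← h, ha1]
    · have h1 : 1 ≤ i := by omega
      have := hmono i h1; have := ih h1; omega

lemma top_spec {r : ℕ} (hr : 1 ≤ r) :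
    1 ≤ Nat.findGreatest (fun j => 1 ≤ j ∧ a j ≤ r) r ∧
    a (Nat.findGreatest (fun j => 1 ≤ j ∧ a j ≤ r) r) ≤ r ∧
    r < a (Nat.findGreatest (fun j => 1 ≤ j ∧ a j ≤ r) r + 1) := by
  set k := Nat.findGreatest (fun j => 1 ≤ j ∧ a j ≤ r) r with hk
  have h1 : 1 ≤ k := Nat.le_findGreatest hr ⟨le_refl 1, by rw [ha1]; omega⟩
  have hP : 1 ≤ k ∧ a k ≤ r :=
    Nat.findGreatest_of_ne_zero hk.symm (by omega)
  refine ⟨h1, hP.2, ?_⟩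
  by_contra hcon
  push_neg at hcon
  have hk1r : k + 1 ≤ r := le_trans (le_a ha1 hmono (by omega)) hcon
  exact Nat.findGreatest_is_greatest (P := fun j => 1 ≤ j ∧ a j ≤ r) (by omega) hk1r ⟨by omega, hcon⟩

lemma greedyIdxAux_congr_fuel : ∀ (f1 : ℕ) (f2 r : ℕ), r ≤ f1 → r ≤ f2 →
    greedyIdxAux a f1 r = greedyIdxAux a f2 r := by
  intro f1
  induction f1 with
  | zero =>
    intro f2 r h1 h2
    have : r = 0 := by omega
    subst this
    cases f2 <;> simp [greedyIdxAux]
  | succ f1 ih =>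
    intro f2 r h1 h2
    rcases Nat.eq_zero_or_pos r with h | h
    · subst h; cases f2 <;> simp [greedyIdxAux]
    · obtain ⟨f2', rfl⟩ : ∃ f2', f2 = f2' + 1 := ⟨f2 - 1, by omega⟩
      have hne : ¬ (r = 0) := by omega
      simp only [greedyIdxAux, hne, if_false]
      obtain ⟨h1', h2', _⟩ := top_spec ha1 hmono h
      set i := Nat.findGreatest (fun j => 1 ≤ j ∧ a j ≤ r) r
      have hai : 1 ≤ a i := one_le_a ha1 hmono h1'
      congr 1
      exact ih f2' (r - a i) (by omega) (by omega)

lemma greedyIdx_step {r k : ℕ} (hk : 1 ≤ k) (h1 : a k ≤ r) (h2 : r < a (k + 1)) :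
    greedyIdx a r = k :: greedyIdx a (r - a k) := by
  have hak : 1 ≤ a k := one_le_a ha1 hmono hk
  have hr : 1 ≤ r := le_trans hak h1
  have hfind : Nat.findGreatest (fun j => 1 ≤ j ∧ a j ≤ r) r = k := by
    have hup : Nat.findGreatest (fun j => 1 ≤ j ∧ a j ≤ r) r ≤ k := by
      by_contra hcon
      push_neg at hcon
      obtain ⟨hg1, hg2, _⟩ := top_spec ha1 hmono hr
      have := a_mono ha1 hmono (show 1 ≤ k+1 by omega)
        (show k + 1 ≤ Nat.findGreatest (fun j => 1 ≤ j ∧ a j ≤ r) r by omega)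
      omega
    have hlo : k ≤ Nat.findGreatest (fun j => 1 ≤ j ∧ a j ≤ r) r :=
      Nat.le_findGreatest (le_trans (le_a ha1 hmono hk) h1) ⟨hk, h1⟩
    omega
  obtain ⟨r', rfl⟩ : ∃ r', r = r' + 1 := ⟨r - 1, by omega⟩
  show greedyIdxAux a (r' + 1) (r' + 1) = _
  rw [greedyIdxAux]
  simp only [if_neg (by omega : ¬ (r' + 1 = 0))]
  rw [hfind]
  congr 1
  exact greedyIdxAux_congr_fuel ha1 hmono r' (r' + 1 - a k) (r' + 1 - a k) (by omega) le_rfl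

omit ha1 hmono in
lemma greedyIdx_zero : greedyIdx a 0 = [] := rfl

lemma greedyIdx_sum : ∀ r : ℕ, ((greedyIdx a r).map a).sum = r := by
  intro r
  induction r using Nat.strong_induction_on with
  | _ r ih =>
    rcases Nat.eq_zero_or_pos r with h | h
    · subst h; rfl
    · obtain ⟨h1, h2, h3⟩ := top_spec ha1 hmono h
      set k := Nat.findGreatest (fun j => 1 ≤ j ∧ a j ≤ r) r
      rw [greedyIdx_step ha1 hmono h1 h2 h3]
      have hak : 1 ≤ a k := one_le_a ha1 hmono h1
      have := ih (r - a k) (by omega)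
      simp only [List.map_cons, List.sum_cons, this]
      omega

lemma greedyIdx_mem : ∀ r : ℕ, ∀ j ∈ greedyIdx a r, 1 ≤ j ∧ a j ≤ r := by
  intro r
  induction r using Nat.strong_induction_on with
  | _ r ih =>
    rcases Nat.eq_zero_or_pos r with h | h
    · subst h; intro j hj; exact absurd hj List.not_mem_nil
    · obtain ⟨h1, h2, h3⟩ := top_spec ha1 hmono h
      set k := Nat.findGreatest (fun j => 1 ≤ j ∧ a j ≤ r) r
      rw [greedyIdx_step ha1 hmono h1 h2 h3]
      intro j hj
      rcases List.mem_cons.1 hj with h' | h'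
      · subst h'; exact ⟨h1, h2⟩
      · have hak : 1 ≤ a k := one_le_a ha1 hmono h1
        have := ih (r - a k) (by omega) j h'
        exact ⟨this.1, by omega⟩

lemma replSeq_step {b : ℕ → ℤ} {r k : ℕ} (hk : 1 ≤ k) (h1 : a k ≤ r) (h2 : r < a (k + 1)) :
    replSeq a b r = b k + replSeq a b (r - a k) := by
  unfold replSeq
  rw [greedyIdx_step ha1 hmono hk h1 h2]
  simp

lemma greedyIdxCap_top {k : ℕ} (hk : 1 ≤ k) :
    greedyIdxCap a k (a (k + 1)) = k :: greedyIdx a (a (k + 1) - a k) := by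
  have hcapaux : ∀ (f r : ℕ), r ≤ f → r < a (k + 1) →
      greedyIdxCapAux a k f r = greedyIdxAux a f r := by
    intro f
    induction f with
    | zero => intro r h1 h2; rfl
    | succ f ih =>
      intro r h1 h2
      rcases Nat.eq_zero_or_pos r with h | h
      · subst h; simp [greedyIdxCapAux, greedyIdxAux]
      · have hne : ¬ (r = 0) := by omega
        simp only [greedyIdxCapAux, greedyIdxAux, hne, if_false]
        have hPeq : (fun j => 1 ≤ j ∧ j ≤ k ∧ a j ≤ r) = (fun j => 1 ≤ j ∧ a j ≤ r) := by
          funext j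
          apply propext
          constructor
          · rintro ⟨hj1, _, hj3⟩; exact ⟨hj1, hj3⟩
          · rintro ⟨hj1, hj3⟩
            refine ⟨hj1, ?_, hj3⟩
            by_contra hcon
            push_neg at hcon
            have := a_mono ha1 hmono (show 1 ≤ k + 1 by omega) hcon
            omega
        have hifind : Nat.findGreatest (fun j => 1 ≤ j ∧ j ≤ k ∧ a j ≤ r) r
            = Nat.findGreatest (fun j => 1 ≤ j ∧ a j ≤ r) r := by
          congr 1
        rw [hifind]
        obtain ⟨h1', h2', h3'⟩ := top_spec ha1 hmono h
        set i := Nat.findGreatest (fun j => 1 ≤ j ∧ a j ≤ r) r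
        have hai : 1 ≤ a i := one_le_a ha1 hmono h1'
        congr 1
        exact ih (r - a i) (by omega) (by omega)
  have hr : 1 ≤ a (k + 1) := one_le_a ha1 hmono (by omega)
  have hak : 1 ≤ a k := one_le_a ha1 hmono hk
  have hkk1 : a k < a (k + 1) := hmono k hk
  obtain ⟨r', hr'⟩ : ∃ r', a (k + 1) = r' + 1 := ⟨a (k+1) - 1, by omega⟩
  show greedyIdxCapAux a k (a (k+1)) (a (k+1)) = _
  rw [hr']
  rw [greedyIdxCapAux]
  simp only [if_neg (by omega : ¬ (r' + 1 = 0))]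
  have hfind : Nat.findGreatest (fun j => 1 ≤ j ∧ j ≤ k ∧ a j ≤ r' + 1) (r' + 1) = k := by
    have hlo : k ≤ Nat.findGreatest (fun j => 1 ≤ j ∧ j ≤ k ∧ a j ≤ r' + 1) (r' + 1) :=
      Nat.le_findGreatest (by have := le_a ha1 hmono hk; omega) ⟨hk, le_rfl, by omega⟩
    have hup : Nat.findGreatest (fun j => 1 ≤ j ∧ j ≤ k ∧ a j ≤ r' + 1) (r' + 1) ≤ k := by
      by_contra hcon
      push_neg at hcon
      have hne : Nat.findGreatest (fun j => 1 ≤ j ∧ j ≤ k ∧ a j ≤ r' + 1) (r' + 1) ≠ 0 := by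
        omega
      have := (Nat.findGreatest_of_ne_zero
        (P := fun j => 1 ≤ j ∧ j ≤ k ∧ a j ≤ r' + 1) rfl hne).2.1
      omega
    omega
  rw [hfind]
  congr 1
  rw [hcapaux r' (r' + 1 - a k) (by omega) (by omega)]
  exact greedyIdxAux_congr_fuel ha1 hmono r' (r' + 1 - a k) (r' + 1 - a k) (by omega) le_rfl

end Greedy
section ExpCirc

lemma expCirc_add (x y : ℝ) : expCirc (x + y) = expCirc x * expCirc y := by
  unfold expCirc
  rw [← Complex.exp_add]
  congr 1
  push_cast
  ring

lemma norm_expCirc (x : ℝ) : ‖expCirc x‖ = 1 := by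
  unfold expCirc
  rw [Complex.norm_exp]
  have : (2 * ↑Real.pi * Complex.I * (x:ℂ)).re = 0 := by
    simp [Complex.mul_re, Complex.mul_im]
  rw [this, Real.exp_zero]

lemma expCirc_int (n : ℤ) : expCirc (n : ℝ) = 1 := by
  unfold expCirc
  rw [← Complex.exp_int_mul_two_pi_mul_I n]
  congr 1
  push_cast
  ring

lemma expCirc_sub_round (x : ℝ) : expCirc x = expCirc (x - round x) := by
  have h : x - round x + ((round x : ℤ) : ℝ) = x := by push_cast; ring
  rw [← h, expCirc_add, expCirc_int, mul_one]
  rw [h]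

lemma norm_expCirc_sub_one_le (x : ℝ) :
    ‖expCirc x - 1‖ ≤ 4 * Real.pi * distToInt x := by
  set t := x - round x with ht
  have hd : distToInt x = |t| := rfl
  have hx : expCirc x = expCirc t := expCirc_sub_round x
  have hnz : ‖(2 * (Real.pi : ℂ) * Complex.I * (t : ℂ))‖ = 2 * Real.pi * |t| := by
    simp only [norm_mul, Complex.norm_ofNat, Complex.norm_real, Complex.norm_I,
      Real.norm_eq_abs]
    rw [abs_of_pos Real.pi_pos]
    ring
  have hec : expCirc t = Complex.exp (2 * (Real.pi : ℂ) * Complex.I * (t : ℂ)) := rfl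
  rw [hx, hd]
  rcases le_or_gt (2 * Real.pi * |t|) 1 with h | h
  · have h2 := Complex.norm_exp_sub_one_le (x := 2 * (Real.pi : ℂ) * Complex.I * (t : ℂ))
      (by rw [hnz]; exact h)
    rw [hnz, ← hec] at h2
    calc ‖expCirc t - 1‖ ≤ 2 * (2 * Real.pi * |t|) := h2
      _ = 4 * Real.pi * |t| := by ring
  · have h2 : ‖expCirc t - 1‖ ≤ 2 := by
      calc ‖expCirc t - 1‖ ≤ ‖expCirc t‖ + ‖(1:ℂ)‖ := norm_sub_le _ _
        _ = 2 := by rw [norm_expCirc]; norm_num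
    calc ‖expCirc t - 1‖ ≤ 2 := h2
      _ ≤ 2 * (2 * Real.pi * |t|) := by nlinarith
      _ = 4 * Real.pi * |t| := by ring

end ExpCirc

/-- `ε i = ‖e(γ b i) - 1‖` for `i ≥ 1`, else `0`. -/
noncomputable def epsC (b : ℕ → ℤ) (γ : ℝ) (i : ℕ) : ℝ :=
  if 1 ≤ i then ‖expCirc (γ * (b i : ℝ)) - 1‖ else 0

lemma epsC_nonneg (b : ℕ → ℤ) (γ : ℝ) (i : ℕ) : 0 ≤ epsC b γ i := by
  unfold epsC; split <;> positivity

lemma epsC_of_pos (b : ℕ → ℤ) (γ : ℝ) {i : ℕ} (hi : 1 ≤ i) :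
    epsC b γ i = ‖expCirc (γ * (b i : ℝ)) - 1‖ := if_pos hi

/-- The Weyl sum `∑_{n<N} e(γ A(n))`. -/
noncomputable def WS (a : ℕ → ℕ) (b : ℕ → ℤ) (γ : ℝ) (N : ℕ) : ℂ :=
  ∑ n ∈ Finset.range N, expCirc (γ * (replSeq a b n : ℝ))

/-- `y k = WS (a k) / a k`. -/
noncomputable def yk (a : ℕ → ℕ) (b : ℕ → ℤ) (γ : ℝ) (k : ℕ) : ℂ :=
  WS a b γ (a k) / (a k : ℂ)

section WSLemmas

variable {a : ℕ → ℕ} {b : ℕ → ℤ} {γ : ℝ}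
variable (ha1 : a 1 = 1) (hmono : ∀ n, 1 ≤ n → a n < a (n + 1))

lemma WS_zero : WS a b γ 0 = 0 := by simp [WS]

lemma WS_succ (N : ℕ) :
    WS a b γ (N + 1) = WS a b γ N + expCirc (γ * (replSeq a b N : ℝ)) :=
  Finset.sum_range_succ _ _

lemma norm_WS_le (N : ℕ) : ‖WS a b γ N‖ ≤ N := by
  calc ‖WS a b γ N‖ ≤ ∑ n ∈ Finset.range N, ‖expCirc (γ * (replSeq a b n : ℝ))‖ :=
        norm_sum_le _ _
    _ = N := by
        simp only [norm_expCirc, Finset.sum_const, Finset.card_range, nsmul_eq_mul, mul_one]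

lemma norm_yk_le (k : ℕ) : ‖yk a b γ k‖ ≤ 1 := by
  unfold yk
  rcases Nat.eq_zero_or_pos (a k) with h | h
  · simp [h]
  · rw [norm_div]
    rw [div_le_one (by simp [Complex.norm_natCast]; omega)]
    simpa using norm_WS_le (a := a) (b := b) (γ := γ) (a k)

include ha1 hmono

lemma WS_rec {k m : ℕ} (hk : 1 ≤ k) (hm : m ≤ a (k + 1) - a k) :
    WS a b γ (a k + m) = WS a b γ (a k) + expCirc (γ * (b k : ℝ)) * WS a b γ m := by
  induction m with
  | zero => simp [WS_zero]
  | succ m ih =>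
    have hkk : a k < a (k + 1) := hmono k hk
    have hm' : m ≤ a (k + 1) - a k := by omega
    have hstep : replSeq a b (a k + m) = b k + replSeq a b m := by
      have := replSeq_step (b := b) ha1 hmono hk
        (show a k ≤ a k + m by omega) (show a k + m < a (k + 1) by omega)
      simpa using this
    have hF : expCirc (γ * (replSeq a b (a k + m) : ℝ))
        = expCirc (γ * (b k : ℝ)) * expCirc (γ * (replSeq a b m : ℝ)) := by
      rw [hstep, ← expCirc_add]
      congr 1
      push_cast
      ring
    have heq : a k + (m + 1) = (a k + m) + 1 := by omega
    rw [heq, WS_succ, ih hm', hF, WS_succ]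
    ring

end WSLemmas

section Digits

variable {a : ℕ → ℕ} {b : ℕ → ℤ} {γ : ℝ} {s : ℝ}
variable (ha1 : a 1 = 1) (hmono : ∀ n, 1 ≤ n → a n < a (n + 1))
variable (hs1 : 1 < s) (hgrow : ∀ n, 1 ≤ n → (a (n + 1) : ℝ) < s * (a n : ℝ))

include ha1 hmono hs1 hgrow

lemma WS_digit_rep : ∀ r : ℕ,
    ‖WS a b γ r - ((greedyIdx a r).map (fun j => WS a b γ (a j))).sum‖
      ≤ (s - 1) * ((greedyIdx a r).map (fun j => epsC b γ j * (a j : ℝ))).sum := by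
  intro r
  induction r using Nat.strong_induction_on with
  | _ r ih =>
    rcases Nat.eq_zero_or_pos r with h | h
    · subst h
      rw [greedyIdx_zero, WS_zero]
      simp
    · obtain ⟨h1, h2, h3⟩ := top_spec ha1 hmono h
      set k := Nat.findGreatest (fun j => 1 ≤ j ∧ a j ≤ r) r with hkdef
      have hak : 1 ≤ a k := one_le_a ha1 hmono h1
      set m := r - a k with hmdef
      have hrec : WS a b γ r = WS a b γ (a k) + expCirc (γ * (b k : ℝ)) * WS a b γ m := by
        have := WS_rec (b := b) (γ := γ) ha1 hmono h1 (show m ≤ a (k+1) - a k by omega)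
        rw [show a k + m = r by omega] at this
        exact this
      rw [greedyIdx_step ha1 hmono h1 h2 h3, ← hmdef]
      simp only [List.map_cons, List.sum_cons]
      have hmle : (m : ℝ) ≤ (s - 1) * (a k : ℝ) := by
        have hg := hgrow k h1
        have hm1 : (m : ℝ) = (r : ℝ) - (a k : ℝ) := by
          rw [hmdef]; exact Nat.cast_sub h2
        have h3' : (r : ℝ) < (a (k+1) : ℝ) := by exact_mod_cast h3
        nlinarith
      have hbound : ‖WS a b γ r - (WS a b γ (a k)
          + ((greedyIdx a m).map (fun j => WS a b γ (a j))).sum)‖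
          ≤ epsC b γ k * (m : ℝ) + (s - 1) * ((greedyIdx a m).map
            (fun j => epsC b γ j * (a j : ℝ))).sum := by
        rw [hrec]
        have e1 : WS a b γ (a k) + expCirc (γ * (b k : ℝ)) * WS a b γ m -
            (WS a b γ (a k) + ((greedyIdx a m).map (fun j => WS a b γ (a j))).sum)
            = (expCirc (γ * (b k : ℝ)) - 1) * WS a b γ m
              + (WS a b γ m - ((greedyIdx a m).map (fun j => WS a b γ (a j))).sum) := by
          ring
        rw [e1]
        refine le_trans (norm_add_le _ _) (add_le_add ?_ (ih m (by omega)))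
        rw [norm_mul, epsC_of_pos b γ h1]
        exact mul_le_mul_of_nonneg_left (norm_WS_le m) (norm_nonneg _)
      calc ‖WS a b γ r - (WS a b γ (a k)
            + ((greedyIdx a m).map (fun j => WS a b γ (a j))).sum)‖
          ≤ epsC b γ k * (m : ℝ) + (s - 1) * ((greedyIdx a m).map
            (fun j => epsC b γ j * (a j : ℝ))).sum := hbound
        _ ≤ (s - 1) * (epsC b γ k * (a k : ℝ) + ((greedyIdx a m).map
            (fun j => epsC b γ j * (a j : ℝ))).sum) := by
            have h0 : 0 ≤ epsC b γ k := epsC_nonneg b γ k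
            nlinarith [epsC_nonneg b γ k, hmle]

end Digits
section Master

variable {a : ℕ → ℕ} {b : ℕ → ℤ} {γ : ℝ} {s : ℝ}
variable (ha1 : a 1 = 1) (hmono : ∀ n, 1 ≤ n → a n < a (n + 1))
variable (hs1 : 1 < s) (hgrow : ∀ n, 1 ≤ n → (a (n + 1) : ℝ) < s * (a n : ℝ))

include ha1 hmono hs1 hgrow

lemma WS_crude (z : ℂ) (E : ℝ) (hE : ∀ i, 1 ≤ i → epsC b γ i ≤ E) (hE0 : 0 ≤ E) :
    ∀ N : ℕ, ‖WS a b γ N - (N : ℂ) * z‖ ≤ (1 + ‖z‖ + (s - 1) * E) * N := by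
  intro N
  induction N using Nat.strong_induction_on with
  | _ N ih =>
    rcases Nat.eq_zero_or_pos N with h | h
    · subst h
      simp [WS_zero]
    · obtain ⟨h1, h2, h3⟩ := top_spec ha1 hmono h
      set k := Nat.findGreatest (fun j => 1 ≤ j ∧ a j ≤ N) N with hkdef
      have hak : 1 ≤ a k := one_le_a ha1 hmono h1
      set m := N - a k with hmdef
      have hrec : WS a b γ N = WS a b γ (a k) + expCirc (γ * (b k : ℝ)) * WS a b γ m := by
        have := WS_rec (b := b) (γ := γ) ha1 hmono h1 (show m ≤ a (k+1) - a k by omega)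
        rw [show a k + m = N by omega] at this
        exact this
      have hmle : (m : ℝ) ≤ (s - 1) * (a k : ℝ) := by
        have hg := hgrow k h1
        have hm1 : (m : ℝ) = (N : ℝ) - (a k : ℝ) := by rw [hmdef]; exact Nat.cast_sub h2
        have h3' : (N : ℝ) < (a (k+1) : ℝ) := by exact_mod_cast h3
        nlinarith
      have hNcast : (N : ℂ) = (a k : ℂ) + (m : ℂ) := by
        have : a k + m = N := by omega
        exact_mod_cast (congrArg (Nat.cast (R := ℂ)) this).symm
      have e1 : WS a b γ N - (N : ℂ) * z
          = (WS a b γ (a k) - (a k : ℂ) * z) + (expCirc (γ * (b k : ℝ)) - 1) * WS a b γ m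
            + (WS a b γ m - (m : ℂ) * z) := by
        rw [hrec, hNcast]; ring
      rw [e1]
      have hb1 : ‖WS a b γ (a k) - (a k : ℂ) * z‖ ≤ (1 + ‖z‖) * (a k : ℝ) := by
        refine le_trans (norm_sub_le _ _) ?_
        rw [norm_mul, Complex.norm_natCast]
        have := norm_WS_le (a := a) (b := b) (γ := γ) (a k)
        nlinarith [norm_nonneg z]
      have hb2 : ‖(expCirc (γ * (b k : ℝ)) - 1) * WS a b γ m‖ ≤ E * (m : ℝ) := by
        rw [norm_mul]
        have h1' := epsC_of_pos b γ h1
        have := norm_WS_le (a := a) (b := b) (γ := γ) m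
        have := hE k h1
        have := epsC_nonneg b γ k
        have := norm_nonneg (expCirc (γ * (b k : ℝ)) - 1)
        nlinarith
      have hb3 := ih m (by omega)
      have hNr : (N : ℝ) = (a k : ℝ) + (m : ℝ) := by
        have : a k + m = N := by omega
        exact_mod_cast (congrArg (Nat.cast (R := ℝ)) this).symm
      calc ‖_ + _ + _‖ ≤ ‖(WS a b γ (a k) - (a k : ℂ) * z)
              + (expCirc (γ * (b k : ℝ)) - 1) * WS a b γ m‖
            + ‖WS a b γ m - (m : ℂ) * z‖ := norm_add_le _ _
        _ ≤ (‖WS a b γ (a k) - (a k : ℂ) * z‖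
              + ‖(expCirc (γ * (b k : ℝ)) - 1) * WS a b γ m‖)
            + ‖WS a b γ m - (m : ℂ) * z‖ := by
              gcongr
              exact norm_add_le _ _
        _ ≤ ((1 + ‖z‖) * (a k : ℝ) + E * (m : ℝ))
            + (1 + ‖z‖ + (s - 1) * E) * (m : ℝ) := by gcongr
        _ ≤ (1 + ‖z‖ + (s - 1) * E) * (N : ℝ) := by
            rw [hNr]
            nlinarith [norm_nonneg z, epsC_nonneg b γ k, hmle, hE k h1]

lemma WS_refined (z : ℂ) (E T ebar : ℝ) (hE : ∀ i, 1 ≤ i → epsC b γ i ≤ E) (hE0 : 0 ≤ E)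
    (J : ℕ) (hJ : 1 ≤ J)
    (hT : ∀ i, J + 1 ≤ i → epsC b γ i ≤ T) (hT0 : 0 ≤ T)
    (hebar : ∀ i, J + 1 ≤ i → ‖WS a b γ (a i) - (a i : ℂ) * z‖ ≤ ebar * (a i : ℝ))
    (heb0 : 0 ≤ ebar) :
    ∀ N : ℕ, ‖WS a b γ N - (N : ℂ) * z‖
      ≤ (ebar + (s - 1) * T) * N + (1 + ‖z‖ + (s - 1) * E) * (a (J + 1) : ℝ) := by
  intro N
  induction N using Nat.strong_induction_on with
  | _ N ih =>
    rcases Nat.lt_or_ge N (a (J + 1)) with hcase | hcase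
    · have := WS_crude (b := b) (γ := γ) ha1 hmono hs1 hgrow z E hE hE0 N
      have hNle : (N : ℝ) ≤ (a (J+1) : ℝ) := by exact_mod_cast le_of_lt hcase
      have h0 : 0 ≤ (ebar + (s - 1) * T) * N :=
        mul_nonneg (by nlinarith) (Nat.cast_nonneg N)
      have hC0 : 0 ≤ 1 + ‖z‖ + (s - 1) * E := by nlinarith [norm_nonneg z]
      nlinarith
    · have h : 1 ≤ N := le_trans (one_le_a ha1 hmono (by omega)) hcase
      obtain ⟨h1, h2, h3⟩ := top_spec ha1 hmono h
      set k := Nat.findGreatest (fun j => 1 ≤ j ∧ a j ≤ N) N with hkdef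
      have hak : 1 ≤ a k := one_le_a ha1 hmono h1
      have hkJ : J + 1 ≤ k := by
        by_contra hcon
        push_neg at hcon
        have : a (k + 1) ≤ a (J + 1) := a_mono ha1 hmono (by omega) (by omega)
        omega
      set m := N - a k with hmdef
      have hrec : WS a b γ N = WS a b γ (a k) + expCirc (γ * (b k : ℝ)) * WS a b γ m := by
        have := WS_rec (b := b) (γ := γ) ha1 hmono h1 (show m ≤ a (k+1) - a k by omega)
        rw [show a k + m = N by omega] at this
        exact this
      have hmle : (m : ℝ) ≤ (s - 1) * (a k : ℝ) := by
        have hg := hgrow k h1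
        have hm1 : (m : ℝ) = (N : ℝ) - (a k : ℝ) := by rw [hmdef]; exact Nat.cast_sub h2
        have h3' : (N : ℝ) < (a (k+1) : ℝ) := by exact_mod_cast h3
        nlinarith
      have hNcast : (N : ℂ) = (a k : ℂ) + (m : ℂ) := by
        have : a k + m = N := by omega
        exact_mod_cast (congrArg (Nat.cast (R := ℂ)) this).symm
      have e1 : WS a b γ N - (N : ℂ) * z
          = (WS a b γ (a k) - (a k : ℂ) * z) + (expCirc (γ * (b k : ℝ)) - 1) * WS a b γ m
            + (WS a b γ m - (m : ℂ) * z) := by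
        rw [hrec, hNcast]; ring
      rw [e1]
      have hb1 : ‖WS a b γ (a k) - (a k : ℂ) * z‖ ≤ ebar * (a k : ℝ) := hebar k hkJ
      have hb2 : ‖(expCirc (γ * (b k : ℝ)) - 1) * WS a b γ m‖ ≤ T * (m : ℝ) := by
        rw [norm_mul]
        have h1' := epsC_of_pos b γ h1
        have := norm_WS_le (a := a) (b := b) (γ := γ) m
        have := hT k hkJ
        have := epsC_nonneg b γ k
        have := norm_nonneg (expCirc (γ * (b k : ℝ)) - 1)
        nlinarith
      have hb3 := ih m (by omega)
      have hNr : (N : ℝ) = (a k : ℝ) + (m : ℝ) := by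
        have : a k + m = N := by omega
        exact_mod_cast (congrArg (Nat.cast (R := ℝ)) this).symm
      calc ‖_ + _ + _‖ ≤ ‖(WS a b γ (a k) - (a k : ℂ) * z)
              + (expCirc (γ * (b k : ℝ)) - 1) * WS a b γ m‖
            + ‖WS a b γ m - (m : ℂ) * z‖ := norm_add_le _ _
        _ ≤ (‖WS a b γ (a k) - (a k : ℂ) * z‖
              + ‖(expCirc (γ * (b k : ℝ)) - 1) * WS a b γ m‖)
            + ‖WS a b γ m - (m : ℂ) * z‖ := by
              gcongr
              exact norm_add_le _ _
        _ ≤ (ebar * (a k : ℝ) + T * (m : ℝ))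
            + ((ebar + (s - 1) * T) * m + (1 + ‖z‖ + (s - 1) * E) * (a (J + 1) : ℝ)) := by
              gcongr
        _ ≤ (ebar + (s - 1) * T) * N + (1 + ‖z‖ + (s - 1) * E) * (a (J + 1) : ℝ) := by
            rw [hNr]
            nlinarith [hmle, hT0, heb0]

end Master
section Contraction

lemma dobrushin {S : Finset ℕ} (y : ℕ → ℂ) (v v' : ℕ → ℝ) (j0 : ℕ) (g d : ℝ)
    (hv0 : ∀ j ∈ S, 0 ≤ v j) (hv'0 : ∀ j ∈ S, 0 ≤ v' j)
    (hv1 : ∑ j ∈ S, v j = 1) (hv'1 : ∑ j ∈ S, v' j = 1)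
    (hj0 : j0 ∈ S) (hgv : g ≤ v j0) (hgv' : g ≤ v' j0) (hg0 : 0 ≤ g)
    (hd : ∀ i ∈ S, ∀ j ∈ S, ‖y i - y j‖ ≤ d) :
    ‖(∑ j ∈ S, (v j : ℂ) * y j) - ∑ j ∈ S, (v' j : ℂ) * y j‖ ≤ (1 - g) * d := by
  classical
  set μ : ℕ → ℝ := fun j => min (v j) (v' j) with hμ
  set α : ℕ → ℝ := fun j => v j - μ j with hα
  set β : ℕ → ℝ := fun j => v' j - μ j with hβ
  have hα0 : ∀ j ∈ S, 0 ≤ α j := fun j hj => by simp [hα, hμ]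
  have hβ0 : ∀ j ∈ S, 0 ≤ β j := fun j hj => by simp [hβ, hμ]
  have hμ0 : ∀ j ∈ S, 0 ≤ μ j := fun j hj => le_min (hv0 j hj) (hv'0 j hj)
  have hμj0 : g ≤ μ j0 := le_min hgv hgv'
  have hμsum : g ≤ ∑ j ∈ S, μ j :=
    le_trans hμj0 (Finset.single_le_sum hμ0 hj0)
  have hαsum : ∑ j ∈ S, α j = 1 - ∑ j ∈ S, μ j := by
    rw [hα]; rw [Finset.sum_sub_distrib, hv1]
  have hβsum : ∑ j ∈ S, β j = 1 - ∑ j ∈ S, μ j := by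
    rw [hβ]; rw [Finset.sum_sub_distrib, hv'1]
  set ρ : ℝ := ∑ j ∈ S, α j with hρ
  have hρβ : ∑ j ∈ S, β j = ρ := by rw [hβsum, hαsum]
  have hρ0 : 0 ≤ ρ := Finset.sum_nonneg hα0
  have hρle : ρ ≤ 1 - g := by rw [hαsum]; linarith
  have hd0 : 0 ≤ d := le_trans (norm_nonneg _) (hd j0 hj0 j0 hj0)
  have hdiff : (∑ j ∈ S, (v j : ℂ) * y j) - ∑ j ∈ S, (v' j : ℂ) * y j
      = (∑ j ∈ S, (α j : ℂ) * y j) - ∑ j ∈ S, (β j : ℂ) * y j := by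
    rw [← Finset.sum_sub_distrib, ← Finset.sum_sub_distrib]
    refine Finset.sum_congr rfl fun j hj => ?_
    simp only [hα, hβ, hμ]
    push_cast
    ring
  rw [hdiff]
  rcases eq_or_lt_of_le hρ0 with hρz | hρpos
  · have hall : ∀ j ∈ S, α j = 0 :=
      (Finset.sum_eq_zero_iff_of_nonneg hα0).1 hρz.symm
    have hallβ : ∀ j ∈ S, β j = 0 :=
      (Finset.sum_eq_zero_iff_of_nonneg hβ0).1 (by rw [hρβ, ← hρz])
    have h1 : (∑ j ∈ S, (α j : ℂ) * y j) = 0 :=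
      Finset.sum_eq_zero fun j hj => by rw [hall j hj]; simp
    have h2 : (∑ j ∈ S, (β j : ℂ) * y j) = 0 :=
      Finset.sum_eq_zero fun j hj => by rw [hallβ j hj]; simp
    rw [h1, h2, sub_zero, norm_zero]
    have hg1 : 0 ≤ 1 - g := by linarith
    positivity
  · have key : (ρ : ℂ) * ((∑ j ∈ S, (α j : ℂ) * y j) - ∑ j ∈ S, (β j : ℂ) * y j)
        = ∑ j ∈ S, ∑ i ∈ S, ((α j * β i : ℝ) : ℂ) * (y j - y i) := by
      have e1 : (ρ : ℂ) * (∑ j ∈ S, (α j : ℂ) * y j)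
          = ∑ j ∈ S, ∑ i ∈ S, ((α j * β i : ℝ) : ℂ) * y j := by
        rw [show (ρ : ℂ) = ∑ i ∈ S, (β i : ℂ) by rw [← hρβ]; push_cast; ring]
        rw [Finset.sum_mul_sum]
        rw [Finset.sum_comm]
        refine Finset.sum_congr rfl fun j hj => Finset.sum_congr rfl fun i hi => ?_
        push_cast
        ring
      have e2 : (ρ : ℂ) * (∑ i ∈ S, (β i : ℂ) * y i)
          = ∑ j ∈ S, ∑ i ∈ S, ((α j * β i : ℝ) : ℂ) * y i := by
        rw [show (ρ : ℂ) = ∑ j ∈ S, (α j : ℂ) by rw [hρ]; push_cast; ring]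
        rw [Finset.sum_mul_sum]
        refine Finset.sum_congr rfl fun j hj => Finset.sum_congr rfl fun i hi => ?_
        push_cast
        ring
      rw [mul_sub, e1, e2, ← Finset.sum_sub_distrib]
      refine Finset.sum_congr rfl fun j hj => ?_
      rw [← Finset.sum_sub_distrib]
      refine Finset.sum_congr rfl fun i hi => ?_
      ring
    have hnorm : ρ * ‖(∑ j ∈ S, (α j : ℂ) * y j) - ∑ j ∈ S, (β j : ℂ) * y j‖
        ≤ ρ * (ρ * d) := by
      have hln : ‖(ρ : ℂ) * ((∑ j ∈ S, (α j : ℂ) * y j) - ∑ j ∈ S, (β j : ℂ) * y j)‖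
          = ρ * ‖(∑ j ∈ S, (α j : ℂ) * y j) - ∑ j ∈ S, (β j : ℂ) * y j‖ := by
        rw [norm_mul, Complex.norm_real, Real.norm_eq_abs, abs_of_nonneg hρ0]
      rw [← hln, key]
      calc ‖∑ j ∈ S, ∑ i ∈ S, ((α j * β i : ℝ) : ℂ) * (y j - y i)‖
          ≤ ∑ j ∈ S, ‖∑ i ∈ S, ((α j * β i : ℝ) : ℂ) * (y j - y i)‖ := norm_sum_le _ _
        _ ≤ ∑ j ∈ S, ∑ i ∈ S, ‖((α j * β i : ℝ) : ℂ) * (y j - y i)‖ := by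
            gcongr with j hj
            exact norm_sum_le _ _
        _ ≤ ∑ j ∈ S, ∑ i ∈ S, α j * β i * d := by
            refine Finset.sum_le_sum fun j hj => Finset.sum_le_sum fun i hi => ?_
            rw [norm_mul, Complex.norm_real, Real.norm_eq_abs,
              abs_of_nonneg (mul_nonneg (hα0 j hj) (hβ0 i hi))]
            exact mul_le_mul_of_nonneg_left (hd j hj i hi)
              (mul_nonneg (hα0 j hj) (hβ0 i hi))
        _ = (∑ j ∈ S, ∑ i ∈ S, α j * β i) * d := by
            rw [Finset.sum_mul]
            refine Finset.sum_congr rfl fun j hj => ?_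
            rw [Finset.sum_mul]
        _ = ρ * (ρ * d) := by
            rw [← Finset.sum_mul_sum, hρβ, ← hρ]
            ring
    have := le_of_mul_le_mul_left hnorm hρpos
    calc ‖(∑ j ∈ S, (α j : ℂ) * y j) - ∑ j ∈ S, (β j : ℂ) * y j‖ ≤ ρ * d := this
      _ ≤ (1 - g) * d := mul_le_mul_of_nonneg_right hρle hd0

lemma decay_to_zero {lam : ℝ} (hl0 : 0 ≤ lam) (hl1 : lam < 1) (d e : ℕ → ℝ)
    (hd0 : ∀ n, 0 ≤ d n) (he0 : ∀ n, 0 ≤ e n)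
    (hrec : ∀ n, d (n + 1) ≤ lam * d n + e n)
    (he : Filter.Tendsto e Filter.atTop (nhds 0)) :
    Filter.Tendsto d Filter.atTop (nhds 0) := by
  rw [Metric.tendsto_atTop]
  intro ε hε
  have hε2 : 0 < (1 - lam) * (ε / 2) := by
    have : 0 < 1 - lam := by linarith
    positivity
  obtain ⟨N₁, hN₁⟩ := (Metric.tendsto_atTop.1 he) ((1 - lam) * (ε / 2)) hε2
  have hbd : ∀ t, d (N₁ + t) ≤ lam ^ t * d N₁ + ε / 2 := by
    intro t
    induction t with
    | zero => simp; linarith [hε.le]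
    | succ t ih =>
      have he' : e (N₁ + t) ≤ (1 - lam) * (ε / 2) := by
        have := hN₁ (N₁ + t) (by omega)
        rw [Real.dist_eq, sub_zero, abs_of_nonneg (he0 _)] at this
        linarith
      have := hrec (N₁ + t)
      have hstep : d (N₁ + (t + 1)) ≤ lam * d (N₁ + t) + e (N₁ + t) := by
        rw [show N₁ + (t + 1) = (N₁ + t) + 1 by omega]
        exact hrec (N₁ + t)
      calc d (N₁ + (t + 1)) ≤ lam * d (N₁ + t) + e (N₁ + t) := hstep
        _ ≤ lam * (lam ^ t * d N₁ + ε / 2) + (1 - lam) * (ε / 2) := by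
            have := mul_le_mul_of_nonneg_left ih hl0
            linarith
        _ = lam ^ (t + 1) * d N₁ + (ε / 2) := by ring
  have hpow : Filter.Tendsto (fun t => lam ^ t * d N₁) Filter.atTop (nhds 0) := by
    have := (tendsto_pow_atTop_nhds_zero_of_lt_one hl0 hl1).mul_const (d N₁)
    simpa using this
  obtain ⟨t₀, ht₀⟩ := (Metric.tendsto_atTop.1 hpow) (ε / 4) (by positivity)
  refine ⟨N₁ + t₀, fun n hn => ?_⟩
  have ht : d n ≤ lam ^ (n - N₁) * d N₁ + ε / 2 := by
    have := hbd (n - N₁)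
    rw [show N₁ + (n - N₁) = n by omega] at this
    exact this
  have hp := ht₀ (n - N₁) (by omega)
  rw [Real.dist_eq, sub_zero] at hp ⊢
  have hpabs : lam ^ (n - N₁) * d N₁ < ε / 4 := lt_of_abs_lt hp
  rw [abs_of_nonneg (hd0 n)]
  linarith

end Contraction
section WindowContraction

lemma window_contraction
    (y : ℕ → ℂ) (hy : ∀ k, ‖y k‖ ≤ 1)
    (L : ℕ) (hL : 2 ≤ L) (c : ℝ) (hc0 : 0 < c) (hc1 : c ≤ 1)
    (η : ℕ → ℝ) (hη0 : ∀ k, 0 ≤ η k) (hηs : Summable η)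
    (K₀ : ℕ) (w : ℕ → ℕ → ℝ)
    (hw0 : ∀ k, K₀ ≤ k → ∀ j, 0 ≤ w k j)
    (hw1 : ∀ k, K₀ ≤ k → ∑ j ∈ Finset.Icc (k + 1 - L) k, w k j = 1)
    (hwc : ∀ k, K₀ ≤ k → c ≤ w k k)
    (happ : ∀ k, K₀ ≤ k →
      ‖y (k + 1) - ∑ j ∈ Finset.Icc (k + 1 - L) k, (w k j : ℂ) * y j‖ ≤ η k) :
    CauchySeq y := by
  classical
  set Θ : ℕ → ℝ := fun p => ∑' t, η (t + p) with hΘdef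
  have hshift : ∀ p, Summable (fun t => η (t + p)) := fun p => (summable_nat_add_iff p).2 hηs
  have hΘ0 : ∀ p, 0 ≤ Θ p := fun p => tsum_nonneg (fun t => hη0 _)
  have hpart : ∀ p m, ∑ t ∈ Finset.Ico p m, η t ≤ Θ p := by
    intro p m
    rw [Finset.sum_Ico_eq_sum_range]
    calc ∑ i ∈ Finset.range (m - p), η (p + i)
        = ∑ i ∈ Finset.range (m - p), η (i + p) :=
          Finset.sum_congr rfl fun i _ => by rw [add_comm]
      _ ≤ Θ p := Summable.sum_le_tsum _ (fun i _ => hη0 _) (hshift p)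
  have hΘto : Filter.Tendsto Θ Filter.atTop (nhds 0) := tendsto_sum_nat_add η
  have comb : ∀ k, K₀ ≤ k → ∀ m, k + L - 1 ≤ m →
      ∃ v : ℕ → ℝ, (∀ j, 0 ≤ v j) ∧
        (∑ j ∈ Finset.Icc k (k + L - 1), v j = 1) ∧
        c ^ (m - (k + L - 1)) ≤ v (k + L - 1) ∧
        ‖y m - ∑ j ∈ Finset.Icc k (k + L - 1), (v j : ℂ) * y j‖
          ≤ ∑ t ∈ Finset.Ico (k + L - 1) m, η t := by
    intro k hk m
    induction m using Nat.strong_induction_on with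
    | _ m ih =>
      intro hm
      rcases eq_or_lt_of_le hm with hbase | hstepp
      · refine ⟨fun j => if j = k + L - 1 then 1 else 0, fun j => by positivity, ?_, ?_, ?_⟩
        · rw [Finset.sum_ite_eq' (Finset.Icc k (k + L - 1)) (k + L - 1) (fun _ => (1:ℝ))]
          rw [if_pos (Finset.mem_Icc.2 ⟨by omega, le_rfl⟩)]
        · rw [← hbase]
          simp
        · have he : ∑ j ∈ Finset.Icc k (k + L - 1),
              ((if j = k + L - 1 then (1:ℝ) else 0 : ℝ) : ℂ) * y j = y (k + L - 1) := by
            have hcong : ∀ j ∈ Finset.Icc k (k + L - 1),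
                ((if j = k + L - 1 then (1:ℝ) else 0 : ℝ) : ℂ) * y j
                  = if j = k + L - 1 then y j else 0 := by
              intro j hj
              split <;> simp
            rw [Finset.sum_congr rfl hcong,
              Finset.sum_ite_eq' (Finset.Icc k (k + L - 1)) (k + L - 1) y,
              if_pos (Finset.mem_Icc.2 ⟨by omega, le_rfl⟩)]
          rw [he, ← hbase]
          simp only [sub_self, norm_zero]
          exact Finset.sum_nonneg fun t _ => hη0 t
      · set m' := m - 1 with hm'def
        have hm'1 : m = m' + 1 := by omega
        have hm'K : K₀ ≤ m' := by omega
        have hm'k : k + L - 1 ≤ m' := by omega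
        have hex : ∀ i : ℕ, ∃ v : ℕ → ℝ, i ∈ Finset.Icc (m' + 1 - L) m' →
            ((∀ j, 0 ≤ v j) ∧ (∑ j ∈ Finset.Icc k (k + L - 1), v j = 1) ∧
             (‖y i - ∑ j ∈ Finset.Icc k (k + L - 1), (v j : ℂ) * y j‖
               ≤ ∑ t ∈ Finset.Ico (k + L - 1) m', η t) ∧
             (i = m' → c ^ (m' - (k + L - 1)) ≤ v (k + L - 1))) := by
          intro i
          by_cases hi : i ∈ Finset.Icc (m' + 1 - L) m'
          · have hmem := Finset.mem_Icc.1 hi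
            by_cases hi2 : k + L - 1 ≤ i
            · obtain ⟨v, hv0, hv1, hvc, hverr⟩ := ih i (by omega) hi2
              refine ⟨v, fun _ => ⟨hv0, hv1, ?_, fun hieq => ?_⟩⟩
              · exact le_trans hverr (Finset.sum_le_sum_of_subset_of_nonneg
                  (Finset.Ico_subset_Ico le_rfl (by omega)) (fun t _ _ => hη0 t))
              · subst hieq; exact hvc
            · refine ⟨fun j => if j = i then 1 else 0, fun _ => ⟨fun j => by positivity,
                ?_, ?_, fun hieq => by omega⟩⟩
              · rw [Finset.sum_ite_eq' (Finset.Icc k (k + L - 1)) i (fun _ => (1:ℝ))]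
                rw [if_pos (Finset.mem_Icc.2 ⟨by omega, by omega⟩)]
              · have he : ∑ j ∈ Finset.Icc k (k + L - 1),
                    ((if j = i then (1:ℝ) else 0 : ℝ) : ℂ) * y j = y i := by
                  have hcong : ∀ j ∈ Finset.Icc k (k + L - 1),
                      ((if j = i then (1:ℝ) else 0 : ℝ) : ℂ) * y j
                        = if j = i then y j else 0 := by
                    intro j hj
                    split <;> simp
                  rw [Finset.sum_congr rfl hcong,
                    Finset.sum_ite_eq' (Finset.Icc k (k + L - 1)) i y,
                    if_pos (Finset.mem_Icc.2 ⟨by omega, by omega⟩)]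
                rw [he]
                simp only [sub_self, norm_zero]
                exact Finset.sum_nonneg fun t _ => hη0 t
          · exact ⟨fun _ => 0, fun h => absurd h hi⟩
        choose V hV using hex
        refine ⟨fun j => ∑ i ∈ Finset.Icc (m' + 1 - L) m', w m' i * V i j, ?_, ?_, ?_, ?_⟩
        · intro j
          exact Finset.sum_nonneg fun i hi =>
            mul_nonneg (hw0 m' hm'K i) ((hV i hi).1 j)
        · rw [Finset.sum_comm]
          calc ∑ i ∈ Finset.Icc (m' + 1 - L) m', ∑ j ∈ Finset.Icc k (k + L - 1), w m' i * V i j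
              = ∑ i ∈ Finset.Icc (m' + 1 - L) m', w m' i * ∑ j ∈ Finset.Icc k (k + L - 1), V i j := by
                refine Finset.sum_congr rfl fun i hi => ?_
                rw [Finset.mul_sum]
            _ = ∑ i ∈ Finset.Icc (m' + 1 - L) m', w m' i := by
                refine Finset.sum_congr rfl fun i hi => ?_
                rw [(hV i hi).2.1, mul_one]
            _ = 1 := hw1 m' hm'K
        · have hm'mem : m' ∈ Finset.Icc (m' + 1 - L) m' := Finset.mem_Icc.2 ⟨by omega, le_rfl⟩
          have hterm : c * c ^ (m' - (k + L - 1)) ≤ w m' m' * V m' (k + L - 1) :=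
            mul_le_mul (hwc m' hm'K) ((hV m' hm'mem).2.2.2 rfl)
              (pow_nonneg hc0.le _) (le_trans hc0.le (hwc m' hm'K))
          have hsingle : w m' m' * V m' (k + L - 1)
              ≤ ∑ i ∈ Finset.Icc (m' + 1 - L) m', w m' i * V i (k + L - 1) :=
            Finset.single_le_sum (fun i hi =>
              mul_nonneg (hw0 m' hm'K i) ((hV i hi).1 _)) hm'mem
          have hexp : m - (k + L - 1) = (m' - (k + L - 1)) + 1 := by omega
          rw [hexp, pow_succ]
          calc c ^ (m' - (k + L - 1)) * c = c * c ^ (m' - (k + L - 1)) := by ring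
            _ ≤ w m' m' * V m' (k + L - 1) := hterm
            _ ≤ _ := hsingle
        · have hsum_swap : ∑ j ∈ Finset.Icc k (k + L - 1),
              ((∑ i ∈ Finset.Icc (m' + 1 - L) m', w m' i * V i j : ℝ) : ℂ) * y j
              = ∑ i ∈ Finset.Icc (m' + 1 - L) m',
                  (w m' i : ℂ) * (∑ j ∈ Finset.Icc k (k + L - 1), (V i j : ℂ) * y j) := by
            calc ∑ j ∈ Finset.Icc k (k + L - 1),
                  ((∑ i ∈ Finset.Icc (m' + 1 - L) m', w m' i * V i j : ℝ) : ℂ) * y j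
                = ∑ j ∈ Finset.Icc k (k + L - 1), ∑ i ∈ Finset.Icc (m' + 1 - L) m',
                    (w m' i : ℂ) * ((V i j : ℂ) * y j) := by
                  refine Finset.sum_congr rfl fun j hj => ?_
                  push_cast
                  rw [Finset.sum_mul]
                  exact Finset.sum_congr rfl fun i hi => by ring
              _ = ∑ i ∈ Finset.Icc (m' + 1 - L) m', ∑ j ∈ Finset.Icc k (k + L - 1),
                    (w m' i : ℂ) * ((V i j : ℂ) * y j) := Finset.sum_comm
              _ = _ := by
                  refine Finset.sum_congr rfl fun i hi => ?_
                  rw [Finset.mul_sum]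
          have hsplit : y m - ∑ j ∈ Finset.Icc k (k + L - 1),
              ((∑ i ∈ Finset.Icc (m' + 1 - L) m', w m' i * V i j : ℝ) : ℂ) * y j
              = (y (m' + 1) - ∑ i ∈ Finset.Icc (m' + 1 - L) m', (w m' i : ℂ) * y i)
                + ∑ i ∈ Finset.Icc (m' + 1 - L) m',
                    (w m' i : ℂ) * (y i - ∑ j ∈ Finset.Icc k (k + L - 1), (V i j : ℂ) * y j) := by
            rw [hsum_swap]
            have e : ∑ i ∈ Finset.Icc (m' + 1 - L) m',
                (w m' i : ℂ) * (y i - ∑ j ∈ Finset.Icc k (k + L - 1), (V i j : ℂ) * y j)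
                = ∑ i ∈ Finset.Icc (m' + 1 - L) m', (w m' i : ℂ) * y i
                  - ∑ i ∈ Finset.Icc (m' + 1 - L) m',
                      (w m' i : ℂ) * (∑ j ∈ Finset.Icc k (k + L - 1), (V i j : ℂ) * y j) := by
              rw [← Finset.sum_sub_distrib]
              exact Finset.sum_congr rfl fun i hi => by ring
            rw [e, ← hm'1]
            ring
          rw [hsplit]
          have hb1 := happ m' hm'K
          have hb2 : ‖∑ i ∈ Finset.Icc (m' + 1 - L) m',
              (w m' i : ℂ) * (y i - ∑ j ∈ Finset.Icc k (k + L - 1), (V i j : ℂ) * y j)‖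
              ≤ ∑ t ∈ Finset.Ico (k + L - 1) m', η t := by
            calc ‖∑ i ∈ Finset.Icc (m' + 1 - L) m',
                (w m' i : ℂ) * (y i - ∑ j ∈ Finset.Icc k (k + L - 1), (V i j : ℂ) * y j)‖
                ≤ ∑ i ∈ Finset.Icc (m' + 1 - L) m',
                  ‖(w m' i : ℂ) * (y i - ∑ j ∈ Finset.Icc k (k + L - 1), (V i j : ℂ) * y j)‖ :=
                  norm_sum_le _ _
              _ ≤ ∑ i ∈ Finset.Icc (m' + 1 - L) m',
                    w m' i * (∑ t ∈ Finset.Ico (k + L - 1) m', η t) := by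
                  refine Finset.sum_le_sum fun i hi => ?_
                  rw [norm_mul, Complex.norm_real, Real.norm_eq_abs,
                    abs_of_nonneg (hw0 m' hm'K i)]
                  exact mul_le_mul_of_nonneg_left ((hV i hi).2.2.1) (hw0 m' hm'K i)
              _ = ∑ t ∈ Finset.Ico (k + L - 1) m', η t := by
                  rw [← Finset.sum_mul, hw1 m' hm'K, one_mul]
          have hIcoeq : ∑ t ∈ Finset.Ico (k + L - 1) m, η t
              = ∑ t ∈ Finset.Ico (k + L - 1) m', η t + η m' := by
            rw [hm'1, Finset.sum_Ico_succ_top hm'k]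
          rw [hIcoeq]
          calc ‖_ + _‖ ≤ ‖y (m' + 1) - ∑ i ∈ Finset.Icc (m' + 1 - L) m', (w m' i : ℂ) * y i‖
                + ‖∑ i ∈ Finset.Icc (m' + 1 - L) m',
                    (w m' i : ℂ) * (y i - ∑ j ∈ Finset.Icc k (k + L - 1), (V i j : ℂ) * y j)‖ :=
              norm_add_le _ _
            _ ≤ η m' + ∑ t ∈ Finset.Ico (k + L - 1) m', η t := add_le_add hb1 hb2
            _ = ∑ t ∈ Finset.Ico (k + L - 1) m', η t + η m' := by ring
  -- the geometric window sequence
  set kq : ℕ → ℕ := fun n => K₀ + n * (L - 1) with hkq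
  have hkq1 : ∀ n, kq (n + 1) = kq n + (L - 1) := by
    intro n
    simp only [hkq, Nat.succ_mul]
    omega
  have hkqK : ∀ n, K₀ ≤ kq n := fun n => Nat.le_add_right _ _
  set lam : ℝ := 1 - c ^ (L - 1) with hlam
  have hcl0 : 0 < c ^ (L - 1) := pow_pos hc0 _
  have hcl1 : c ^ (L - 1) ≤ 1 := pow_le_one₀ hc0.le hc1
  have hlam0 : 0 ≤ lam := by rw [hlam]; linarith
  have hlam1 : lam < 1 := by rw [hlam]; linarith
  set d : ℕ → ℝ := fun n =>
    Nat.rec (2 : ℝ) (fun n dn => lam * dn + 2 * Θ (kq (n + 1))) n with hd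
  have hd_zero : d 0 = 2 := rfl
  have hd_succ : ∀ n, d (n + 1) = lam * d n + 2 * Θ (kq (n + 1)) := fun n => rfl
  have hd0 : ∀ n, 0 ≤ d n := by
    intro n
    induction n with
    | zero => rw [hd_zero]; norm_num
    | succ n ihn =>
      rw [hd_succ]
      have := hΘ0 (kq (n + 1))
      nlinarith
  have hwin : ∀ n, ∀ p ∈ Finset.Icc (kq n) (kq n + L - 1),
      ∀ q ∈ Finset.Icc (kq n) (kq n + L - 1), ‖y p - y q‖ ≤ d n := by
    intro n
    induction n with
    | zero =>
      intro p hp q hq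
      calc ‖y p - y q‖ ≤ ‖y p‖ + ‖y q‖ := norm_sub_le _ _
        _ ≤ 2 := by have := hy p; have := hy q; linarith
        _ = d 0 := hd_zero.symm
    | succ n ihn =>
      intro p hp q hq
      have hpm := Finset.mem_Icc.1 hp
      have hqm := Finset.mem_Icc.1 hq
      have hks : kq (n + 1) = kq n + (L - 1) := hkq1 n
      have hbase : kq n + L - 1 = kq (n + 1) := by omega
      have hp1 : kq n + L - 1 ≤ p := by omega
      have hq1 : kq n + L - 1 ≤ q := by omega
      obtain ⟨vp, hvp0, hvp1, hvpc, hvperr⟩ := comb (kq n) (hkqK n) p hp1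
      obtain ⟨vq, hvq0, hvq1, hvqc, hvqerr⟩ := comb (kq n) (hkqK n) q hq1
      have hpc : c ^ (L - 1) ≤ vp (kq n + L - 1) :=
        le_trans (pow_le_pow_of_le_one hc0.le hc1 (by omega : p - (kq n + L - 1) ≤ L - 1)) hvpc
      have hqc : c ^ (L - 1) ≤ vq (kq n + L - 1) :=
        le_trans (pow_le_pow_of_le_one hc0.le hc1 (by omega : q - (kq n + L - 1) ≤ L - 1)) hvqc
      have hperr : ‖y p - ∑ j ∈ Finset.Icc (kq n) (kq n + L - 1), (vp j : ℂ) * y j‖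
          ≤ Θ (kq (n + 1)) := by
        refine le_trans hvperr ?_
        rw [← hbase]
        exact hpart _ _
      have hqerr : ‖y q - ∑ j ∈ Finset.Icc (kq n) (kq n + L - 1), (vq j : ℂ) * y j‖
          ≤ Θ (kq (n + 1)) := by
        refine le_trans hvqerr ?_
        rw [← hbase]
        exact hpart _ _
      have hdob := dobrushin y vp vq (kq n + L - 1) (c ^ (L - 1)) (d n)
        (fun j _ => hvp0 j) (fun j _ => hvq0 j) hvp1 hvq1
        (Finset.mem_Icc.2 ⟨by omega, le_rfl⟩) hpc hqc hcl0.le ihn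
      have hsplit2 : y p - y q =
          (y p - ∑ j ∈ Finset.Icc (kq n) (kq n + L - 1), (vp j : ℂ) * y j)
          - (y q - ∑ j ∈ Finset.Icc (kq n) (kq n + L - 1), (vq j : ℂ) * y j)
          + ((∑ j ∈ Finset.Icc (kq n) (kq n + L - 1), (vp j : ℂ) * y j)
            - ∑ j ∈ Finset.Icc (kq n) (kq n + L - 1), (vq j : ℂ) * y j) := by
        ring
      rw [hsplit2, hd_succ]
      calc ‖_ + _‖ ≤ ‖(y p - ∑ j ∈ Finset.Icc (kq n) (kq n + L - 1), (vp j : ℂ) * y j)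
              - (y q - ∑ j ∈ Finset.Icc (kq n) (kq n + L - 1), (vq j : ℂ) * y j)‖
            + ‖(∑ j ∈ Finset.Icc (kq n) (kq n + L - 1), (vp j : ℂ) * y j)
              - ∑ j ∈ Finset.Icc (kq n) (kq n + L - 1), (vq j : ℂ) * y j‖ := norm_add_le _ _
        _ ≤ (‖y p - ∑ j ∈ Finset.Icc (kq n) (kq n + L - 1), (vp j : ℂ) * y j‖
              + ‖y q - ∑ j ∈ Finset.Icc (kq n) (kq n + L - 1), (vq j : ℂ) * y j‖)
            + (1 - c ^ (L - 1)) * d n := add_le_add (norm_sub_le _ _) hdob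
        _ ≤ (Θ (kq (n + 1)) + Θ (kq (n + 1))) + (1 - c ^ (L - 1)) * d n := by
              gcongr
        _ = lam * d n + 2 * Θ (kq (n + 1)) := by rw [hlam]; ring
  have hkqto : Filter.Tendsto (fun n => kq (n + 1)) Filter.atTop Filter.atTop := by
    refine Filter.tendsto_atTop_mono (fun n => ?_) Filter.tendsto_id
    show id n ≤ kq (n + 1)
    have h1 : (n + 1) * 1 ≤ (n + 1) * (L - 1) := Nat.mul_le_mul_left _ (by omega)
    simp only [hkq, id]
    omega
  have he_to : Filter.Tendsto (fun n => 2 * Θ (kq (n + 1))) Filter.atTop (nhds 0) := by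
    have h1 := hΘto.comp hkqto
    have h2 := h1.const_mul (2 : ℝ)
    simpa using h2
  have hdto : Filter.Tendsto d Filter.atTop (nhds 0) :=
    decay_to_zero hlam0 hlam1 d (fun n => 2 * Θ (kq (n + 1))) hd0
      (fun n => by show (0:ℝ) ≤ 2 * Θ (kq (n + 1)); have := hΘ0 (kq (n + 1)); linarith)
      (fun n => le_of_eq (hd_succ n)) he_to
  have hts : ∀ n, ∀ m, kq n ≤ m →
      ‖y m - y (kq n)‖ ≤ d n + ∑ t ∈ Finset.Ico (kq n + L - 1) m, η t := by
    intro n m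
    induction m using Nat.strong_induction_on with
    | _ m ih2 =>
      intro hm
      rcases Nat.lt_or_ge m (kq n + L) with hc1' | hc2
      · have hw := hwin n m (Finset.mem_Icc.2 ⟨hm, by omega⟩)
          (kq n) (Finset.mem_Icc.2 ⟨le_rfl, by omega⟩)
        have hsn : (0:ℝ) ≤ ∑ t ∈ Finset.Ico (kq n + L - 1) m, η t :=
          Finset.sum_nonneg fun t _ => hη0 t
        linarith
      · set m' := m - 1 with hm'def
        have hm'1 : m = m' + 1 := by omega
        have hm'K : K₀ ≤ m' := le_trans (hkqK n) (by omega)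
        have hb1 := happ m' hm'K
        have hwsum : ((∑ j ∈ Finset.Icc (m' + 1 - L) m', w m' j : ℝ) : ℂ) = 1 := by
          rw [hw1 m' hm'K]
          norm_num
        have hsplit : y m - y (kq n)
            = (y (m' + 1) - ∑ j ∈ Finset.Icc (m' + 1 - L) m', (w m' j : ℂ) * y j)
              + ∑ j ∈ Finset.Icc (m' + 1 - L) m', (w m' j : ℂ) * (y j - y (kq n)) := by
          have e : ∑ j ∈ Finset.Icc (m' + 1 - L) m', (w m' j : ℂ) * (y j - y (kq n))
              = ∑ j ∈ Finset.Icc (m' + 1 - L) m', (w m' j : ℂ) * y j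
                - (∑ j ∈ Finset.Icc (m' + 1 - L) m', (w m' j : ℂ)) * y (kq n) := by
            rw [Finset.sum_mul, ← Finset.sum_sub_distrib]
            exact Finset.sum_congr rfl fun j hj => by ring
          have e2 : (∑ j ∈ Finset.Icc (m' + 1 - L) m', (w m' j : ℂ)) = 1 := by
            rw [← hwsum]
            push_cast
            ring
          rw [e, e2, ← hm'1]
          ring
        rw [hsplit]
        have hb2 : ‖∑ j ∈ Finset.Icc (m' + 1 - L) m', (w m' j : ℂ) * (y j - y (kq n))‖
            ≤ d n + ∑ t ∈ Finset.Ico (kq n + L - 1) m', η t := by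
          calc ‖∑ j ∈ Finset.Icc (m' + 1 - L) m', (w m' j : ℂ) * (y j - y (kq n))‖
              ≤ ∑ j ∈ Finset.Icc (m' + 1 - L) m', ‖(w m' j : ℂ) * (y j - y (kq n))‖ :=
                norm_sum_le _ _
            _ ≤ ∑ j ∈ Finset.Icc (m' + 1 - L) m',
                  w m' j * (d n + ∑ t ∈ Finset.Ico (kq n + L - 1) m', η t) := by
                refine Finset.sum_le_sum fun j hj => ?_
                have hjm := Finset.mem_Icc.1 hj
                have hjk : kq n ≤ j := by omega
                have hjlt : j < m := by omega
                have := ih2 j hjlt hjk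
                rw [norm_mul, Complex.norm_real, Real.norm_eq_abs,
                  abs_of_nonneg (hw0 m' hm'K j)]
                refine mul_le_mul_of_nonneg_left ?_ (hw0 m' hm'K j)
                refine le_trans this (add_le_add_right (Finset.sum_le_sum_of_subset_of_nonneg
                  (Finset.Ico_subset_Ico le_rfl (by omega)) (fun t _ _ => hη0 t)) _)
            _ = d n + ∑ t ∈ Finset.Ico (kq n + L - 1) m', η t := by
                rw [← Finset.sum_mul, hw1 m' hm'K, one_mul]
        have hIcoeq : ∑ t ∈ Finset.Ico (kq n + L - 1) m, η t
            = ∑ t ∈ Finset.Ico (kq n + L - 1) m', η t + η m' := by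
          rw [hm'1, Finset.sum_Ico_succ_top (by omega)]
        rw [hIcoeq]
        calc ‖_ + _‖ ≤ ‖y (m' + 1) - ∑ j ∈ Finset.Icc (m' + 1 - L) m', (w m' j : ℂ) * y j‖
              + ‖∑ j ∈ Finset.Icc (m' + 1 - L) m', (w m' j : ℂ) * (y j - y (kq n))‖ :=
            norm_add_le _ _
          _ ≤ η m' + (d n + ∑ t ∈ Finset.Ico (kq n + L - 1) m', η t) := add_le_add hb1 hb2
          _ = d n + (∑ t ∈ Finset.Ico (kq n + L - 1) m', η t + η m') := by ring
  rw [Metric.cauchySeq_iff']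
  intro ε hε
  have hcomb_to : Filter.Tendsto (fun n => d n + 2 * Θ (kq (n + 1)))
      Filter.atTop (nhds 0) := by
    have := hdto.add he_to
    simpa using this
  have hev := (Metric.tendsto_atTop.1 hcomb_to) ε hε
  obtain ⟨n₀, hn₀⟩ := hev
  refine ⟨kq n₀, fun m hm => ?_⟩
  have hlt : d n₀ + 2 * Θ (kq (n₀ + 1)) < ε := by
    have := hn₀ n₀ le_rfl
    rw [Real.dist_eq, sub_zero] at this
    have hnn : 0 ≤ d n₀ + 2 * Θ (kq (n₀ + 1)) := by
      have := hΘ0 (kq (n₀ + 1)); have := hd0 n₀; linarith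
    rw [abs_of_nonneg hnn] at this
    exact this
  have hbd := hts n₀ m hm
  have hbase : kq n₀ + L - 1 = kq (n₀ + 1) := by
    have := hkq1 n₀; omega
  have hsum_le : ∑ t ∈ Finset.Ico (kq n₀ + L - 1) m, η t ≤ Θ (kq (n₀ + 1)) := by
    rw [hbase]
    exact hpart _ _
  rw [dist_eq_norm]
  have := hΘ0 (kq (n₀ + 1))
  calc ‖y m - y (kq n₀)‖ ≤ d n₀ + ∑ t ∈ Finset.Ico (kq n₀ + L - 1) m, η t := hbd
    _ ≤ d n₀ + 2 * Θ (kq (n₀ + 1)) := by linarith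
    _ < ε := hlt

end WindowContraction
section Window

variable {a : ℕ → ℕ} {b : ℕ → ℤ} {γ : ℝ} {s : ℝ}
variable (ha1 : a 1 = 1) (hmono : ∀ n, 1 ≤ n → a n < a (n + 1))
variable (hs1 : 1 < s) (hgrow : ∀ n, 1 ≤ n → (a (n + 1) : ℝ) < s * (a n : ℝ))

include ha1 hmono hs1 hgrow

lemma window_step {L : ℕ} (hL : 2 ≤ L)
    (hsig : ∀ n, 2 ≤ n → ∀ i ∈ greedyIdxCap a (n - 1) (a n), n ≤ i + L)
    {k : ℕ} (hk : L ≤ k) :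
    ∃ w : ℕ → ℝ, (∀ j, 0 ≤ w j) ∧ (∑ j ∈ Finset.Icc (k + 1 - L) k, w j = 1) ∧
      (1 / s ≤ w k) ∧
      ‖yk a b γ (k + 1) - ∑ j ∈ Finset.Icc (k + 1 - L) k, (w j : ℂ) * yk a b γ j‖
        ≤ epsC b γ k + (s - 1) * ∑ j ∈ Finset.Icc (k + 1 - L) k, epsC b γ j := by
  classical
  have hk1 : 1 ≤ k := by omega
  have hkk : a k < a (k + 1) := hmono k hk1
  have hak1 : 1 ≤ a k := one_le_a ha1 hmono hk1
  set m := a (k + 1) - a k with hmdef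
  have hm1 : 1 ≤ m := by omega
  have hcap : greedyIdxCap a k (a (k + 1)) = k :: greedyIdx a m :=
    greedyIdxCap_top ha1 hmono hk1
  have hsig' := hsig (k + 1) (by omega)
  have hdig : ∀ j ∈ greedyIdx a m, k + 1 - L ≤ j ∧ j ≤ k := by
    intro j hj
    have hmem := greedyIdx_mem ha1 hmono m j hj
    constructor
    · have hjc : j ∈ greedyIdxCap a ((k + 1) - 1) (a (k + 1)) := by
        rw [show (k + 1) - 1 = k from rfl, hcap]
        exact List.mem_cons_of_mem _ hj
      have := hsig' j hjc
      omega
    · by_contra hcon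
      push_neg at hcon
      have : a (k + 1) ≤ a j := a_mono ha1 hmono (by omega) (by omega)
      omega
  have hsum : ((greedyIdx a m).map a).sum = m := greedyIdx_sum ha1 hmono m
  have hrep := WS_digit_rep (b := b) (γ := γ) ha1 hmono hs1 hgrow m
  have hsubW : (greedyIdx a m).toFinset ⊆ Finset.Icc (k + 1 - L) k := fun j hj =>
    Finset.mem_Icc.2 (hdig j (List.mem_toFinset.1 hj))
  have hcount_zero : ∀ j ∈ Finset.Icc (k + 1 - L) k, j ∉ (greedyIdx a m).toFinset →
      (greedyIdx a m).count j = 0 := by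
    intro j _ hj
    exact List.count_eq_zero_of_not_mem (fun hmem => hj (List.mem_toFinset.2 hmem))
  have hcount_a : ∑ j ∈ Finset.Icc (k + 1 - L) k, (greedyIdx a m).count j * a j = m := by
    calc ∑ j ∈ Finset.Icc (k + 1 - L) k, (greedyIdx a m).count j * a j
        = ∑ j ∈ Finset.Icc (k + 1 - L) k, (greedyIdx a m).count j • a j := by
          simp [smul_eq_mul]
      _ = ∑ j ∈ (greedyIdx a m).toFinset, (greedyIdx a m).count j • a j :=
          (Finset.sum_subset hsubW (fun j hj hj2 => by rw [hcount_zero j hj hj2]; simp)).symm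
      _ = ((greedyIdx a m).map a).sum := (Finset.sum_list_map_count _ a).symm
      _ = m := hsum
  have hcount_a_le : ∀ j ∈ Finset.Icc (k + 1 - L) k, (greedyIdx a m).count j * a j ≤ m := by
    intro j hj
    exact le_trans (Finset.single_le_sum (f := fun j => (greedyIdx a m).count j * a j)
      (fun i _ => Nat.zero_le _) hj) (le_of_eq hcount_a)
  have hlist_WS : ((greedyIdx a m).map (fun j => WS a b γ (a j))).sum
      = ∑ j ∈ Finset.Icc (k + 1 - L) k, ((greedyIdx a m).count j : ℂ) * WS a b γ (a j) := by
    calc ((greedyIdx a m).map (fun j => WS a b γ (a j))).sum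
        = ∑ j ∈ (greedyIdx a m).toFinset, (greedyIdx a m).count j • WS a b γ (a j) :=
          Finset.sum_list_map_count _ _
      _ = ∑ j ∈ Finset.Icc (k + 1 - L) k, (greedyIdx a m).count j • WS a b γ (a j) :=
          Finset.sum_subset hsubW (fun j hj hj2 => by rw [hcount_zero j hj hj2]; simp)
      _ = _ := Finset.sum_congr rfl fun j _ => by rw [nsmul_eq_mul]
  have hlist_eps : ((greedyIdx a m).map (fun j => epsC b γ j * (a j : ℝ))).sum
      = ∑ j ∈ Finset.Icc (k + 1 - L) k,
          ((greedyIdx a m).count j : ℝ) * (epsC b γ j * (a j : ℝ)) := by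
    calc ((greedyIdx a m).map (fun j => epsC b γ j * (a j : ℝ))).sum
        = ∑ j ∈ (greedyIdx a m).toFinset,
            (greedyIdx a m).count j • (epsC b γ j * (a j : ℝ)) :=
          Finset.sum_list_map_count _ _
      _ = ∑ j ∈ Finset.Icc (k + 1 - L) k,
            (greedyIdx a m).count j • (epsC b γ j * (a j : ℝ)) :=
          Finset.sum_subset hsubW (fun j hj hj2 => by rw [hcount_zero j hj hj2]; simp)
      _ = _ := Finset.sum_congr rfl fun j _ => by rw [nsmul_eq_mul]
  have heps_le : ∑ j ∈ Finset.Icc (k + 1 - L) k,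
      ((greedyIdx a m).count j : ℝ) * (epsC b γ j * (a j : ℝ))
      ≤ (∑ j ∈ Finset.Icc (k + 1 - L) k, epsC b γ j) * (m : ℝ) := by
    rw [Finset.sum_mul]
    refine Finset.sum_le_sum fun j hj => ?_
    have h1 : (((greedyIdx a m).count j * a j : ℕ) : ℝ) ≤ (m : ℝ) :=
      Nat.cast_le.2 (hcount_a_le j hj)
    push_cast at h1
    have h2 := epsC_nonneg b γ j
    nlinarith [mul_nonneg (Nat.cast_nonneg (α := ℝ) ((greedyIdx a m).count j))
      (Nat.cast_nonneg (α := ℝ) (a j))]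
  have hrec : WS a b γ (a (k + 1)) = WS a b γ (a k) + expCirc (γ * (b k : ℝ)) * WS a b γ m := by
    have := WS_rec (b := b) (γ := γ) ha1 hmono hk1 (le_refl (a (k+1) - a k))
    rw [show a k + (a (k+1) - a k) = a (k + 1) by omega] at this
    rw [hmdef]
    exact this
  have hinner : ‖WS a b γ (a (k + 1)) - (WS a b γ (a k)
      + ∑ j ∈ Finset.Icc (k + 1 - L) k, ((greedyIdx a m).count j : ℂ) * WS a b γ (a j))‖
      ≤ (epsC b γ k + (s - 1) * ∑ j ∈ Finset.Icc (k + 1 - L) k, epsC b γ j) * (m : ℝ) := by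
    rw [hrec, ← hlist_WS]
    have e1 : WS a b γ (a k) + expCirc (γ * (b k : ℝ)) * WS a b γ m
        - (WS a b γ (a k) + ((greedyIdx a m).map (fun j => WS a b γ (a j))).sum)
        = (expCirc (γ * (b k : ℝ)) - 1) * WS a b γ m
          + (WS a b γ m - ((greedyIdx a m).map (fun j => WS a b γ (a j))).sum) := by
      ring
    rw [e1]
    have hb1 : ‖(expCirc (γ * (b k : ℝ)) - 1) * WS a b γ m‖ ≤ epsC b γ k * (m : ℝ) := by
      rw [norm_mul, epsC_of_pos b γ hk1]
      exact mul_le_mul_of_nonneg_left (norm_WS_le m) (norm_nonneg _)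
    have hb2 : ‖WS a b γ m - ((greedyIdx a m).map (fun j => WS a b γ (a j))).sum‖
        ≤ (s - 1) * ((∑ j ∈ Finset.Icc (k + 1 - L) k, epsC b γ j) * (m : ℝ)) := by
      refine le_trans hrep ?_
      rw [hlist_eps]
      have hs0 : (0:ℝ) ≤ s - 1 := by linarith
      exact mul_le_mul_of_nonneg_left heps_le hs0
    refine le_trans (norm_add_le _ _) ?_
    refine le_trans (add_le_add hb1 hb2) ?_
    ring_nf
    exact le_refl _
  set A : ℕ → ℝ := fun j => (if j = k then (a k : ℝ) else 0)
      + ((greedyIdx a m).count j : ℝ) * (a j : ℝ) with hA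
  have hak1pos : (0:ℝ) < (a (k + 1) : ℝ) := by
    have : 1 ≤ a (k + 1) := by omega
    exact_mod_cast Nat.lt_of_lt_of_le Nat.zero_lt_one this
  have hA0 : ∀ j, 0 ≤ A j := by
    intro j
    simp only [hA]
    have : (0:ℝ) ≤ ((greedyIdx a m).count j : ℝ) * (a j : ℝ) := by positivity
    split <;> [positivity; simpa]
  have hkW : k ∈ Finset.Icc (k + 1 - L) k := Finset.mem_Icc.2 ⟨by omega, le_rfl⟩
  have hAsum : ∑ j ∈ Finset.Icc (k + 1 - L) k, A j = (a (k + 1) : ℝ) := by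
    simp only [hA]
    rw [Finset.sum_add_distrib]
    rw [Finset.sum_ite_eq' (Finset.Icc (k + 1 - L) k) k (fun _ => (a k : ℝ)), if_pos hkW]
    have hcr : ∑ j ∈ Finset.Icc (k + 1 - L) k, ((greedyIdx a m).count j : ℝ) * (a j : ℝ)
        = (m : ℝ) := by
      have hc := congrArg (Nat.cast (R := ℝ)) hcount_a
      push_cast at hc
      exact hc
    rw [hcr]
    have : a k + m = a (k + 1) := by omega
    exact_mod_cast congrArg (Nat.cast (R := ℝ)) this
  refine ⟨fun j => A j / (a (k + 1) : ℝ), fun j => div_nonneg (hA0 j) hak1pos.le, ?_, ?_, ?_⟩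
  · rw [← Finset.sum_div, hAsum, div_self (ne_of_gt hak1pos)]
  · have hAk : (a k : ℝ) ≤ A k := by
      have e : A k = (a k : ℝ) + ((greedyIdx a m).count k : ℝ) * (a k : ℝ) := by
        simp [hA]
      have h0 : (0:ℝ) ≤ ((greedyIdx a m).count k : ℝ) * (a k : ℝ) := by positivity
      rw [e]
      linarith
    rw [div_le_div_iff₀ (by linarith) hak1pos]
    have hgk := hgrow k hk1
    have hakpos : (0:ℝ) < (a k : ℝ) := by exact_mod_cast hak1
    nlinarith
  · have hanz : ∀ j ∈ Finset.Icc (k + 1 - L) k, ((a j : ℂ) ≠ 0) := by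
      intro j hj
      have hjm := Finset.mem_Icc.1 hj
      have : 1 ≤ a j := one_le_a ha1 hmono (by omega)
      exact_mod_cast Nat.cast_ne_zero.2 (by omega)
    have hterm : ∀ j ∈ Finset.Icc (k + 1 - L) k,
        ((A j / (a (k + 1) : ℝ) : ℝ) : ℂ) * yk a b γ j
        = ((if j = k then (a k : ℂ) else 0) * yk a b γ j
          + ((greedyIdx a m).count j : ℂ) * WS a b γ (a j)) / (a (k + 1) : ℂ) := by
      intro j hj
      simp only [hA]
      push_cast
      rw [div_mul_eq_mul_div]
      congr 1
      have : ((a j : ℂ)) * yk a b γ j = WS a b γ (a j) := by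
        rw [yk, mul_div_cancel₀ _ (hanz j hj)]
      rw [add_mul]
      congr 1
      · split <;> simp
      · rw [mul_assoc, this]
    have hsum2 : ∑ j ∈ Finset.Icc (k + 1 - L) k, ((A j / (a (k + 1) : ℝ) : ℝ) : ℂ) * yk a b γ j
        = (WS a b γ (a k) + ∑ j ∈ Finset.Icc (k + 1 - L) k,
            ((greedyIdx a m).count j : ℂ) * WS a b γ (a j)) / (a (k + 1) : ℂ) := by
      rw [Finset.sum_congr rfl hterm, ← Finset.sum_div]
      congr 1
      rw [Finset.sum_add_distrib]
      congr 1
      have hcong : ∀ j ∈ Finset.Icc (k + 1 - L) k,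
          (if j = k then (a k : ℂ) else 0) * yk a b γ j
          = if j = k then (a k : ℂ) * yk a b γ j else 0 := by
        intro j hj
        split <;> simp
      rw [Finset.sum_congr rfl hcong,
        Finset.sum_ite_eq' (Finset.Icc (k + 1 - L) k) k (fun j => (a k : ℂ) * yk a b γ j),
        if_pos hkW]
      rw [yk, mul_div_cancel₀ _ (hanz k hkW)]
    have hyk1 : yk a b γ (k + 1) = WS a b γ (a (k + 1)) / (a (k + 1) : ℂ) := rfl
    rw [hyk1, hsum2, div_sub_div_same]
    rw [norm_div]
    have hnz : ‖((a (k + 1) : ℕ) : ℂ)‖ = (a (k + 1) : ℝ) := by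
      rw [Complex.norm_natCast]
    rw [hnz]
    rw [div_le_iff₀ hak1pos]
    refine le_trans hinner ?_
    have hmlek : (m : ℝ) ≤ (a (k + 1) : ℝ) := by
      have : m ≤ a (k + 1) := by omega
      exact_mod_cast this
    have hfac : (0:ℝ) ≤ epsC b γ k + (s - 1) * ∑ j ∈ Finset.Icc (k + 1 - L) k, epsC b γ j := by
      have h1 := epsC_nonneg b γ k
      have h2 : (0:ℝ) ≤ ∑ j ∈ Finset.Icc (k + 1 - L) k, epsC b γ j :=
        Finset.sum_nonneg fun j _ => epsC_nonneg b γ j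
      nlinarith
    nlinarith

end Window
/-- Let `a` be a sequence of mild signature, `b` any sequence of
integers, and `A` the replacement sequence of `a` by `b`.  If `γ` is a real number
with `∑_{i=1}^{∞} ‖γ · b i‖ < ∞`, then the Weyl sums
`x_N = (1/N) ∑_{n=0}^{N-1} e (γ · A n)` converge to some complex number. -/
theorem replSeq_weyl_sums_converge
    (a : ℕ → ℕ) (ha : MildSignature a) (b : ℕ → ℤ) (γ : ℝ)
    (hsum : Summable fun i : ℕ => distToInt (γ * (b (i + 1) : ℝ))) :
    ∃ z : ℂ,
      Tendsto
        (fun N : ℕ => (N : ℂ)⁻¹ * ∑ n ∈ Finset.range N,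
          expCirc (γ * (replSeq a b n : ℝ)))
        atTop (nhds z) := by
  classical
  obtain ⟨ha1, hmono, ⟨L₀, hsig₀⟩, ⟨r, s, hr1, hs1, hgrowth⟩⟩ := ha
  set L := L₀ + 2 with hLdef
  have hL : 2 ≤ L := by omega
  have hsig : ∀ n, 2 ≤ n → ∀ i ∈ greedyIdxCap a (n - 1) (a n), n ≤ i + L := by
    intro n hn i hi
    have := hsig₀ n hn i hi
    omega
  have hgrow : ∀ n, 1 ≤ n → (a (n + 1) : ℝ) < s * (a n : ℝ) := fun n hn => (hgrowth n hn).2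
  -- summability of the epsilons
  have hepsle : ∀ i : ℕ, epsC b γ (i + 1) ≤ 4 * Real.pi * distToInt (γ * (b (i + 1) : ℝ)) := by
    intro i
    rw [epsC_of_pos b γ (by omega)]
    exact norm_expCirc_sub_one_le _
  have hsum1 : Summable (fun i => epsC b γ (i + 1)) :=
    Summable.of_nonneg_of_le (fun i => epsC_nonneg b γ _) hepsle (hsum.mul_left (4 * Real.pi))
  have hεsum : Summable (epsC b γ) := (summable_nat_add_iff 1).1 hsum1
  set E := ∑' i, epsC b γ i with hE
  have hE0 : 0 ≤ E := tsum_nonneg fun i => epsC_nonneg b γ i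
  have hEi : ∀ i : ℕ, 1 ≤ i → epsC b γ i ≤ E := fun i _ =>
    Summable.le_tsum hεsum i fun j _ => epsC_nonneg b γ j
  -- the error sequence
  set η : ℕ → ℝ := fun k => epsC b γ k
      + (s - 1) * ∑ t ∈ Finset.range L, epsC b γ (k - t) with hηdef
  have hη0 : ∀ k, 0 ≤ η k := by
    intro k
    have h1 := epsC_nonneg b γ k
    have h2 : (0:ℝ) ≤ ∑ t ∈ Finset.range L, epsC b γ (k - t) :=
      Finset.sum_nonneg fun t _ => epsC_nonneg b γ _
    have hs0 : (0:ℝ) ≤ s - 1 := by linarith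
    simp only [hηdef]
    nlinarith
  have hηs : Summable η := by
    refine Summable.add hεsum (Summable.mul_left _ ?_)
    refine summable_sum fun t _ => ?_
    have h2 : Summable (fun k => (fun k => epsC b γ (k - t)) (k + t)) := by
      simpa [Nat.add_sub_cancel] using hεsum
    exact (summable_nat_add_iff t).1 h2
  have hwinsum : ∀ k, L ≤ k → ∑ j ∈ Finset.Icc (k + 1 - L) k, epsC b γ j
      = ∑ t ∈ Finset.range L, epsC b γ (k - t) := by
    intro k hk
    refine Finset.sum_nbij' (i := fun j => k - j) (j := fun t => k - t) ?_ ?_ ?_ ?_ ?_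
    · intro j hj
      simp only [Finset.mem_Icc, Finset.mem_range] at hj ⊢
      omega
    · intro t ht
      simp only [Finset.mem_Icc, Finset.mem_range] at ht ⊢
      omega
    · intro j hj
      simp only [Finset.mem_Icc] at hj
      omega
    · intro t ht
      simp only [Finset.mem_range] at ht
      omega
    · intro j hj
      simp only [Finset.mem_Icc] at hj
      rw [show k - (k - j) = j by omega]
  -- the window weights
  have hwex : ∀ k : ℕ, ∃ w : ℕ → ℝ, L ≤ k →
      ((∀ j, 0 ≤ w j) ∧ (∑ j ∈ Finset.Icc (k + 1 - L) k, w j = 1) ∧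
        (1 / s ≤ w k) ∧
        ‖yk a b γ (k + 1) - ∑ j ∈ Finset.Icc (k + 1 - L) k, (w j : ℂ) * yk a b γ j‖
          ≤ epsC b γ k + (s - 1) * ∑ j ∈ Finset.Icc (k + 1 - L) k, epsC b γ j) := by
    intro k
    by_cases h : L ≤ k
    · obtain ⟨w, hw1, hw2, hw3, hw4⟩ :=
        window_step (b := b) (γ := γ) ha1 hmono hs1 hgrow hL hsig h
      exact ⟨w, fun _ => ⟨hw1, hw2, hw3, hw4⟩⟩
    · exact ⟨fun _ => 0, fun hc => absurd hc h⟩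
  choose W hW using hwex
  have hc0 : 0 < 1 / s := by positivity
  have hc1 : 1 / s ≤ 1 := by
    rw [div_le_one (by linarith)]
    linarith
  have hcauchy : CauchySeq (yk a b γ) := by
    refine window_contraction (yk a b γ) (norm_yk_le) L hL (1 / s) hc0 hc1 η hη0 hηs L W
      (fun k hk j => ((hW k) hk).1 j) (fun k hk => ((hW k) hk).2.1)
      (fun k hk => ((hW k) hk).2.2.1) (fun k hk => ?_)
    refine le_trans (((hW k) hk).2.2.2) ?_
    simp only [hηdef]
    rw [hwinsum k hk]
  obtain ⟨z, hz⟩ := cauchySeq_tendsto_of_complete hcauchy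
  refine ⟨z, ?_⟩
  have hzn : ‖z‖ ≤ 1 := by
    have h1 : Tendsto (fun k => ‖yk a b γ k‖) atTop (nhds ‖z‖) := hz.norm
    exact le_of_tendsto h1 (Filter.Eventually.of_forall norm_yk_le)
  set C₀ : ℝ := 1 + ‖z‖ + (s - 1) * E with hC₀def
  have hC₀pos : 0 < C₀ := by
    have := norm_nonneg z
    simp only [hC₀def]
    nlinarith
  rw [Metric.tendsto_atTop]
  intro ε hε
  -- choose J
  have htail : Tendsto (fun p => ∑' i, epsC b γ (i + p)) atTop (nhds 0) :=
    tendsto_sum_nat_add (epsC b γ)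
  have hεs8 : 0 < ε / 8 / (s - 1 + 1) := by
    have : 0 < s - 1 + 1 := by linarith
    positivity
  obtain ⟨J₁, hJ₁⟩ := (Metric.tendsto_atTop.1 htail) (ε / 8 / (s - 1 + 1)) hεs8
  obtain ⟨J₂, hJ₂⟩ := (Metric.tendsto_atTop.1 hz) (ε / 8) (by positivity)
  set J := max (max J₁ J₂) 1 with hJdef
  have hJ1 : 1 ≤ J := le_max_right _ _
  set T := ∑' i, epsC b γ (i + (J + 1)) with hTdef
  have hsumshift : Summable (fun i => epsC b γ (i + (J + 1))) :=
    (summable_nat_add_iff (J + 1)).2 hεsum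
  have hT0 : 0 ≤ T := tsum_nonneg fun i => epsC_nonneg b γ _
  have hTsmall : (s - 1) * T ≤ ε / 8 := by
    have h1 := hJ₁ (J + 1) (by omega)
    rw [Real.dist_eq, sub_zero, abs_of_nonneg (tsum_nonneg fun i => epsC_nonneg b γ _)] at h1
    have h2 : T < ε / 8 / (s - 1 + 1) := h1
    have hs0 : (0:ℝ) < s - 1 + 1 := by linarith
    rw [lt_div_iff₀ hs0] at h2
    nlinarith
  have hT : ∀ i, J + 1 ≤ i → epsC b γ i ≤ T := by
    intro i hi
    have : epsC b γ i = epsC b γ ((i - (J + 1)) + (J + 1)) := by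
      rw [show (i - (J + 1)) + (J + 1) = i by omega]
    rw [this]
    exact Summable.le_tsum hsumshift (i - (J + 1)) fun j _ => epsC_nonneg b γ _
  have hebar : ∀ i, J + 1 ≤ i → ‖WS a b γ (a i) - (a i : ℂ) * z‖ ≤ (ε / 8) * (a i : ℝ) := by
    intro i hi
    have hai : 1 ≤ a i := one_le_a ha1 hmono (by omega)
    have hainz : ((a i : ℕ) : ℂ) ≠ 0 := Nat.cast_ne_zero.2 (by omega)
    have he : WS a b γ (a i) - (a i : ℂ) * z = (a i : ℂ) * (yk a b γ i - z) := by
      rw [yk, mul_sub, mul_div_cancel₀ _ hainz]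
    rw [he, norm_mul, Complex.norm_natCast]
    have hyz : ‖yk a b γ i - z‖ ≤ ε / 8 := by
      have := hJ₂ i (by omega)
      rw [dist_eq_norm] at this
      exact le_of_lt this
    calc (a i : ℝ) * ‖yk a b γ i - z‖ ≤ (a i : ℝ) * (ε / 8) :=
        mul_le_mul_of_nonneg_left hyz (Nat.cast_nonneg _)
      _ = (ε / 8) * (a i : ℝ) := by ring
  have hmaster := WS_refined (b := b) (γ := γ) ha1 hmono hs1 hgrow z E T (ε / 8) hEi hE0 J hJ1
    hT hT0 hebar (by linarith)
  obtain ⟨N₁, hN₁⟩ := exists_nat_ge (C₀ * (a (J + 1) : ℝ) / (ε / 4))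
  refine ⟨max 1 N₁, fun N hN => ?_⟩
  have hN1 : 1 ≤ N := le_trans (le_max_left _ _) hN
  have hNpos : (0:ℝ) < (N : ℝ) := by exact_mod_cast hN1
  have hNcnz : (N : ℂ) ≠ 0 := Nat.cast_ne_zero.2 (by omega)
  have hdist : (N : ℂ)⁻¹ * WS a b γ N - z = (WS a b γ N - (N : ℂ) * z) / (N : ℂ) := by
    field_simp
  have hmb := hmaster N
  have hC₀N : C₀ * (a (J + 1) : ℝ) ≤ (ε / 4) * (N : ℝ) := by
    have h1 : (N₁ : ℝ) ≤ (N : ℝ) := by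
      exact_mod_cast le_trans (le_max_right 1 N₁) hN
    have h2 : C₀ * (a (J + 1) : ℝ) / (ε / 4) ≤ (N : ℝ) := le_trans hN₁ h1
    rw [div_le_iff₀ (by positivity)] at h2
    nlinarith
  rw [dist_eq_norm]
  show ‖(N : ℂ)⁻¹ * WS a b γ N - z‖ < ε
  rw [hdist, norm_div, Complex.norm_natCast]
  rw [div_lt_iff₀ hNpos]
  calc ‖WS a b γ N - (N : ℂ) * z‖
      ≤ (ε / 8 + (s - 1) * T) * N + C₀ * (a (J + 1) : ℝ) := hmb
    _ ≤ (ε / 8 + ε / 8) * N + (ε / 4) * N := by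
        have : (ε / 8 + (s - 1) * T) * (N:ℝ) ≤ (ε / 8 + ε / 8) * N := by
          have := hTsmall
          nlinarith
        linarith
    _ < ε * N := by nlinarith
end
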